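/- arXiv:2403.10841 — 2 statements merged into one kernel-verified Lean document; each statement's English description precedes it below -/
import Mathlib

section
/- Proposition 1 (trajectory derivatives via Pontryagin differentiable programming): suppose maps θ ↦ x_k(θ), θ ↦ u_k(θ), θ ↦ p_k(θ) are differentiable at θ̄ ∈ ℝ^N and satisfy, for all θ in a neighborhood of θ̄, the discrete-time Pontryagin conditions: x_0(θ) = x_0 (fixed), x_{k+1}(θ) = f(x_k(θ), u_k(θ)), p_k(θ) = (∂c_k/∂x)(x_k(θ), u_k(θ), θ) + (∂f/∂x)(x_k(θ), u_k(θ))ᵀ p_{k+1}(θ) for k = 1,…,T−1, (∂c_k/∂u)(x_k(θ), u_k(θ), θ) + (∂f/∂u)(x_k(θ), u_k(θ))ᵀ p_{k+1}(θ) = 0 for k = 0,…,T−1, and p_T(θ) = (∂c_T/∂x)(x_T(θ), θ). Let A_k, B_k, H_k^{xx}, H_k^{xu} = (H_k^{ux})ᵀ, H_k^{uu}, H_k^{xe}, H_k^{ue}, H_T^{xx}, H_T^{xe} be the Jacobians of f and the second derivatives of the Hamiltonian H and of c_T evaluated along (x_k(θ̄), u_k(θ̄), p_{k+1}(θ̄),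 θ̄). Assume H_k^{uu} is invertible for all k = 0,…,T−1 and I + 𝒫_{k+1}ℛ_k is invertible for all k = 0,…,T−1, where 𝒫_T = H_T^{xx}, 𝒲_T = H_T^{xe}, 𝒫_k = 𝒬_k + 𝒜_kᵀ(I + 𝒫_{k+1}ℛ_k)^{-1}𝒫_{k+1}𝒜_k, 𝒲_k = 𝒜_kᵀ(I + 𝒫_{k+1}ℛ_k)^{-1}(𝒲_{k+1} + 𝒫_{k+1}ℳ_k) + 𝒩_k, with 𝒜_k = A_k − B_k(H_k^{uu})^{-1}H_k^{ux}, ℛ_k = B_k(H_k^{uu})^{-1}B_kᵀ, ℳ_k = −B_k(H_k^{uu})^{-1}H_k^{ue}, 𝒬_k = H_k^{xx} − H_k^{xu}(H_k^{uu})^{-1}H_k^{ux}, 𝒩_k = H_k^{xe} − H_k^{xu}(H_k^{uu})^{-1}H_k^{ue}. Then the Jacobians ∂x_k/∂θ(θ̄) and ∂u_k/∂θ(θ̄) are exactly the matrices X_k, U_k generated forward by X_0 = 0, U_k = −(H_k^{uu})^{-1}( H_k^{ux} X_k + H_k^{ue} + B_kᵀ (I + 𝒫_{k+1}ℛ_k)^{-1}(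 𝒫_{k+1}𝒜_k X_k + 𝒫_{k+1}ℳ_k + 𝒲_{k+1} ) ), X_{k+1} = A_k X_k + B_k U_k. -/
open Matrix

namespace PDPaux

open ContinuousLinearMap

/-- Expansion of a continuous linear map on `Fin n → ℝ` over the standard basis. -/
lemma clm_sum {n : ℕ} (L : (Fin n → ℝ) →L[ℝ] ℝ) (v : Fin n → ℝ) :
    L v = ∑ j, v j * L (Pi.single j 1) := by
  have hv : v = ∑ j, v j • (Pi.single j 1 : Fin n → ℝ) := by
    funext i
    simp [Finset.sum_apply, Pi.single_apply]
  conv_lhs => rw [hv]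
  rw [map_sum]
  simp [smul_eq_mul]

/-- Component of the fderiv of a vector-valued map. -/
lemma fderiv_comp_proj {n N : ℕ} (g : (Fin N → ℝ) → (Fin n → ℝ)) {θ : Fin N → ℝ}
    (h : DifferentiableAt ℝ g θ) (v : Fin N → ℝ) (i : Fin n) :
    fderiv ℝ (fun θ' => g θ' i) θ v = fderiv ℝ g θ v i := by
  have h2 : HasFDerivAt (fun θ' => g θ' i)
      ((ContinuousLinearMap.proj (R := ℝ) (φ := fun _ : Fin n => ℝ) i).comp
        (fderiv ℝ g θ)) θ :=
    ((ContinuousLinearMap.proj (R := ℝ) (φ := fun _ : Fin n => ℝ) i).hasFDerivAt).comp θ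
      h.hasFDerivAt
  rw [h2.fderiv]
  rfl

lemma diff_comp_proj {n N : ℕ} (g : (Fin N → ℝ) → (Fin n → ℝ)) {θ : Fin N → ℝ}
    (h : DifferentiableAt ℝ g θ) (i : Fin n) :
    DifferentiableAt ℝ (fun θ' => g θ' i) θ :=
  (((ContinuousLinearMap.proj (R := ℝ) (φ := fun _ : Fin n => ℝ) i).hasFDerivAt).comp θ
      h.hasFDerivAt).differentiableAt

section SecondDeriv

variable {E : Type*} [NormedAddCommGroup E] [NormedSpace ℝ E]

lemma diff_fderiv {G : E → ℝ} (hG : ContDiff ℝ 2 G) :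
    Differentiable ℝ (fderiv ℝ G) :=
  (hG.fderiv_right (m := 1) one_add_one_eq_two.le).differentiable one_ne_zero

lemma diff_fderiv_apply {G : E → ℝ} (hG : ContDiff ℝ 2 G) (w : E) :
    Differentiable ℝ (fun e => fderiv ℝ G e w) := by
  have : (fun e => fderiv ℝ G e w)
      = fun e => (ContinuousLinearMap.apply ℝ ℝ w) (fderiv ℝ G e) := rfl
  rw [this]
  exact (ContinuousLinearMap.apply ℝ ℝ w).differentiable.comp (diff_fderiv hG)

lemma fderiv_fderiv_apply {G : E → ℝ} (hG : ContDiff ℝ 2 G) (q : E) (w z : E) :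
    fderiv ℝ (fun e => fderiv ℝ G e w) q z = fderiv ℝ (fderiv ℝ G) q z w := by
  have h2 : HasFDerivAt (fun e => fderiv ℝ G e w)
      ((ContinuousLinearMap.apply ℝ ℝ w).comp (fderiv ℝ (fderiv ℝ G) q)) q :=
    ((ContinuousLinearMap.apply ℝ ℝ w).hasFDerivAt).comp q (diff_fderiv hG q).hasFDerivAt
  rw [h2.fderiv]
  rfl

/-- Clairaut / symmetry of second derivatives for a `C²` function. -/
lemma sderiv_symm {G : E → ℝ} (hG : ContDiff ℝ 2 G) (q : E) (w z : E) :
    fderiv ℝ (fun e => fderiv ℝ G e w) q z = fderiv ℝ (fun e => fderiv ℝ G e z) q w := by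
  rw [fderiv_fderiv_apply hG, fderiv_fderiv_apply hG]
  exact second_derivative_symmetric
    (fun y => (hG.differentiable two_ne_zero y).hasFDerivAt)
    ((diff_fderiv hG q).hasFDerivAt) z w

/-- Chain rule for the derivative of a moving first partial derivative. -/
lemma fderiv_fderiv_comp {N : ℕ} {G : E → ℝ} (hG : ContDiff ℝ 2 G)
    (γ : (Fin N → ℝ) → E) {θ : Fin N → ℝ} (hγ : DifferentiableAt ℝ γ θ)
    (w : E) (v : Fin N → ℝ) :
    fderiv ℝ (fun t => fderiv ℝ G (γ t) w) θ v
      = fderiv ℝ (fun e => fderiv ℝ G e w) (γ θ) (fderiv ℝ γ θ v) := by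
  have h2 : HasFDerivAt (fun t => fderiv ℝ G (γ t) w)
      ((fderiv ℝ (fun e => fderiv ℝ G e w) (γ θ)).comp (fderiv ℝ γ θ)) θ :=
    ((diff_fderiv_apply hG w (γ θ)).hasFDerivAt).comp θ hγ.hasFDerivAt
  rw [h2.fderiv]
  rfl

end SecondDeriv

end PDPaux

namespace PDPaux2

open ContinuousLinearMap PDPaux

lemma fderiv_partial1 {n m N : ℕ} {G : ((Fin n → ℝ) × (Fin m → ℝ) × (Fin N → ℝ)) → ℝ}
    (hG : Differentiable ℝ G)
    (x0 : Fin n → ℝ) (u0 : Fin m → ℝ) (θ0 : Fin N → ℝ) (v : Fin n → ℝ) :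
    fderiv ℝ (fun xv => G (xv, u0, θ0)) x0 v = fderiv ℝ G (x0, u0, θ0) (v, 0, 0) := by
  have h2 : HasFDerivAt (fun xv : Fin n → ℝ => G (xv, u0, θ0))
      ((fderiv ℝ G (x0, u0, θ0)).comp (inl ℝ (Fin n → ℝ) ((Fin m → ℝ) × (Fin N → ℝ)))) x0 :=
    (hG (x0, u0, θ0)).hasFDerivAt.comp x0 (hasFDerivAt_prodMk_left (𝕜 := ℝ) x0 (u0, θ0))
  rw [h2.fderiv]
  rfl

lemma fderiv_partial2 {n m N : ℕ} {G : ((Fin n → ℝ) × (Fin m → ℝ) × (Fin N → ℝ)) → ℝ}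
    (hG : Differentiable ℝ G)
    (x0 : Fin n → ℝ) (u0 : Fin m → ℝ) (θ0 : Fin N → ℝ) (v : Fin m → ℝ) :
    fderiv ℝ (fun uv => G (x0, uv, θ0)) u0 v = fderiv ℝ G (x0, u0, θ0) (0, v, 0) := by
  have hs : HasFDerivAt
      (fun uv : Fin m → ℝ => ((x0, (uv, θ0)) : (Fin n → ℝ) × (Fin m → ℝ) × (Fin N → ℝ)))
      ((inr ℝ (Fin n → ℝ) ((Fin m → ℝ) × (Fin N → ℝ))).comp
        (inl ℝ (Fin m → ℝ) (Fin N → ℝ))) u0 :=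
    (hasFDerivAt_prodMk_right (𝕜 := ℝ) x0 (u0, θ0)).comp u0
      (hasFDerivAt_prodMk_left (𝕜 := ℝ) u0 θ0)
  have h2 : HasFDerivAt (fun uv : Fin m → ℝ => G (x0, uv, θ0))
      ((fderiv ℝ G (x0, u0, θ0)).comp
        ((inr ℝ (Fin n → ℝ) ((Fin m → ℝ) × (Fin N → ℝ))).comp
          (inl ℝ (Fin m → ℝ) (Fin N → ℝ)))) u0 :=
    (hG (x0, u0, θ0)).hasFDerivAt.comp u0 hs
  rw [h2.fderiv]
  rfl

lemma fderiv_partial3 {n m N : ℕ} {G : ((Fin n → ℝ) × (Fin m → ℝ) × (Fin N → ℝ)) → ℝ}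
    (hG : Differentiable ℝ G)
    (x0 : Fin n → ℝ) (u0 : Fin m → ℝ) (θ0 : Fin N → ℝ) (v : Fin N → ℝ) :
    fderiv ℝ (fun θv => G (x0, u0, θv)) θ0 v = fderiv ℝ G (x0, u0, θ0) (0, 0, v) := by
  have hs : HasFDerivAt
      (fun θv : Fin N → ℝ => ((x0, (u0, θv)) : (Fin n → ℝ) × (Fin m → ℝ) × (Fin N → ℝ)))
      ((inr ℝ (Fin n → ℝ) ((Fin m → ℝ) × (Fin N → ℝ))).comp
        (inr ℝ (Fin m → ℝ) (Fin N → ℝ))) θ0 :=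
    (hasFDerivAt_prodMk_right (𝕜 := ℝ) x0 (u0, θ0)).comp θ0
      (hasFDerivAt_prodMk_right (𝕜 := ℝ) u0 θ0)
  have h2 : HasFDerivAt (fun θv : Fin N → ℝ => G (x0, u0, θv))
      ((fderiv ℝ G (x0, u0, θ0)).comp
        ((inr ℝ (Fin n → ℝ) ((Fin m → ℝ) × (Fin N → ℝ))).comp
          (inr ℝ (Fin m → ℝ) (Fin N → ℝ)))) θ0 :=
    (hG (x0, u0, θ0)).hasFDerivAt.comp θ0 hs
  rw [h2.fderiv]
  rfl

lemma fderiv2_partial1 {n N : ℕ} {G : ((Fin n → ℝ) × (Fin N → ℝ)) → ℝ}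
    (hG : Differentiable ℝ G)
    (x0 : Fin n → ℝ) (θ0 : Fin N → ℝ) (v : Fin n → ℝ) :
    fderiv ℝ (fun xv => G (xv, θ0)) x0 v = fderiv ℝ G (x0, θ0) (v, 0) := by
  have h2 : HasFDerivAt (fun xv : Fin n → ℝ => G (xv, θ0))
      ((fderiv ℝ G (x0, θ0)).comp (inl ℝ (Fin n → ℝ) (Fin N → ℝ))) x0 :=
    (hG (x0, θ0)).hasFDerivAt.comp x0 (hasFDerivAt_prodMk_left (𝕜 := ℝ) x0 θ0)
  rw [h2.fderiv]
  rfl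

/-- Decomposition of a linear functional on the triple product over basis directions. -/
lemma L_decomp3 {n m N : ℕ} (L : ((Fin n → ℝ) × (Fin m → ℝ) × (Fin N → ℝ)) →L[ℝ] ℝ)
    (cx : Fin n → ℝ) (cu : Fin m → ℝ) (s : Fin N → ℝ) :
    L (cx, cu, s) = (∑ i, cx i * L (Pi.single i 1, 0, 0))
      + (∑ j, cu j * L (0, Pi.single j 1, 0)) + L (0, 0, s) := by
  have hsplit : ((cx, cu, s) : (Fin n → ℝ) × (Fin m → ℝ) × (Fin N → ℝ))
      = (cx, 0, 0) + (0, cu, 0) + (0, 0, s) := by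
    simp [Prod.ext_iff]
  rw [hsplit, map_add, map_add]
  congr 2
  · have h1 : L (cx, 0, 0)
        = (L.comp (inl ℝ (Fin n → ℝ) ((Fin m → ℝ) × (Fin N → ℝ)))) cx := rfl
    rw [h1, clm_sum]
    rfl
  · have h1 : L (0, cu, 0)
        = (L.comp ((inr ℝ (Fin n → ℝ) ((Fin m → ℝ) × (Fin N → ℝ))).comp
            (inl ℝ (Fin m → ℝ) (Fin N → ℝ)))) cu := rfl
    rw [h1, clm_sum]
    rfl

/-- Decomposition of a linear functional on the pair product over basis directions. -/
lemma L_decomp2 {n N : ℕ} (L : ((Fin n → ℝ) × (Fin N → ℝ)) →L[ℝ] ℝ)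
    (cx : Fin n → ℝ) (s : Fin N → ℝ) :
    L (cx, s) = (∑ i, cx i * L (Pi.single i 1, 0)) + L (0, s) := by
  have hsplit : ((cx, s) : (Fin n → ℝ) × (Fin N → ℝ)) = (cx, 0) + (0, s) := by
    simp [Prod.ext_iff]
  rw [hsplit, map_add]
  congr 1
  have h1 : L (cx, 0) = (L.comp (inl ℝ (Fin n → ℝ) (Fin N → ℝ))) cx := rfl
  rw [h1, clm_sum]
  rfl

/-- The fderiv of the curve `t ↦ (x t, u t, t)`. -/
lemma fderiv_triple {n m N : ℕ} {x : (Fin N → ℝ) → (Fin n → ℝ)}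
    {u : (Fin N → ℝ) → (Fin m → ℝ)}
    {θ : Fin N → ℝ} (hx : DifferentiableAt ℝ x θ) (hu : DifferentiableAt ℝ u θ)
    (v : Fin N → ℝ) :
    fderiv ℝ (fun t => ((x t, u t, t) : (Fin n → ℝ) × (Fin m → ℝ) × (Fin N → ℝ))) θ v
      = (fderiv ℝ x θ v, fderiv ℝ u θ v, v) := by
  have h : HasFDerivAt (fun t => ((x t, u t, t) : (Fin n → ℝ) × (Fin m → ℝ) × (Fin N → ℝ)))
      ((fderiv ℝ x θ).prod ((fderiv ℝ u θ).prod (ContinuousLinearMap.id ℝ (Fin N → ℝ)))) θ :=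
    hx.hasFDerivAt.prodMk (hu.hasFDerivAt.prodMk (hasFDerivAt_id θ))
  rw [h.fderiv]
  rfl

/-- The fderiv of the curve `t ↦ (x t, t)`. -/
lemma fderiv_pair {n N : ℕ} {x : (Fin N → ℝ) → (Fin n → ℝ)} {θ : Fin N → ℝ}
    (hx : DifferentiableAt ℝ x θ) (v : Fin N → ℝ) :
    fderiv ℝ (fun t => ((x t, t) : (Fin n → ℝ) × (Fin N → ℝ))) θ v
      = (fderiv ℝ x θ v, v) := by
  have h : HasFDerivAt (fun t => ((x t, t) : (Fin n → ℝ) × (Fin N → ℝ)))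
      ((fderiv ℝ x θ).prod (ContinuousLinearMap.id ℝ (Fin N → ℝ))) θ :=
    hx.hasFDerivAt.prodMk (hasFDerivAt_id θ)
  rw [h.fderiv]
  rfl

/-- The fderiv of the section `xv ↦ (xv, u0, θ0)`. -/
lemma fderiv_sect1 {n m N : ℕ} (x0 : Fin n → ℝ) (u0 : Fin m → ℝ) (θ0 : Fin N → ℝ)
    (v : Fin n → ℝ) :
    fderiv ℝ (fun xv : Fin n → ℝ =>
        ((xv, u0, θ0) : (Fin n → ℝ) × (Fin m → ℝ) × (Fin N → ℝ))) x0 v = (v, 0, 0) := by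
  rw [(hasFDerivAt_prodMk_left (𝕜 := ℝ) x0 (u0, θ0)).fderiv]
  rfl

lemma fderiv_sect2 {n m N : ℕ} (x0 : Fin n → ℝ) (u0 : Fin m → ℝ) (θ0 : Fin N → ℝ)
    (v : Fin m → ℝ) :
    fderiv ℝ (fun uv : Fin m → ℝ =>
        ((x0, uv, θ0) : (Fin n → ℝ) × (Fin m → ℝ) × (Fin N → ℝ))) u0 v = (0, v, 0) := by
  have hs : HasFDerivAt
      (fun uv : Fin m → ℝ => ((x0, (uv, θ0)) : (Fin n → ℝ) × (Fin m → ℝ) × (Fin N → ℝ)))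
      ((inr ℝ (Fin n → ℝ) ((Fin m → ℝ) × (Fin N → ℝ))).comp
        (inl ℝ (Fin m → ℝ) (Fin N → ℝ))) u0 :=
    (hasFDerivAt_prodMk_right (𝕜 := ℝ) x0 (u0, θ0)).comp u0
      (hasFDerivAt_prodMk_left (𝕜 := ℝ) u0 θ0)
  rw [hs.fderiv]
  rfl

lemma fderiv2_sect1 {n N : ℕ} (x0 : Fin n → ℝ) (θ0 : Fin N → ℝ) (v : Fin n → ℝ) :
    fderiv ℝ (fun xv : Fin n → ℝ => ((xv, θ0) : (Fin n → ℝ) × (Fin N → ℝ))) x0 v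
      = (v, 0) := by
  rw [(hasFDerivAt_prodMk_left (𝕜 := ℝ) x0 θ0).fderiv]
  rfl

end PDPaux2

namespace PDPaux3

open ContinuousLinearMap PDPaux PDPaux2

lemma fderiv_sect3 {n m N : ℕ} (x0 : Fin n → ℝ) (u0 : Fin m → ℝ) (θ0 : Fin N → ℝ)
    (v : Fin N → ℝ) :
    fderiv ℝ (fun θv : Fin N → ℝ =>
        ((x0, u0, θv) : (Fin n → ℝ) × (Fin m → ℝ) × (Fin N → ℝ))) θ0 v = (0, 0, v) := by
  have hs : HasFDerivAt
      (fun θv : Fin N → ℝ => ((x0, (u0, θv)) : (Fin n → ℝ) × (Fin m → ℝ) × (Fin N → ℝ)))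
      ((inr ℝ (Fin n → ℝ) ((Fin m → ℝ) × (Fin N → ℝ))).comp
        (inr ℝ (Fin m → ℝ) (Fin N → ℝ))) θ0 :=
    (hasFDerivAt_prodMk_right (𝕜 := ℝ) x0 (u0, θ0)).comp θ0
      (hasFDerivAt_prodMk_right (𝕜 := ℝ) u0 θ0)
  rw [hs.fderiv]
  rfl

lemma fderiv2_sect2 {n N : ℕ} (x0 : Fin n → ℝ) (θ0 : Fin N → ℝ) (v : Fin N → ℝ) :
    fderiv ℝ (fun θv : Fin N → ℝ => ((x0, θv) : (Fin n → ℝ) × (Fin N → ℝ))) θ0 v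
      = (0, v) := by
  rw [(hasFDerivAt_prodMk_right (𝕜 := ℝ) x0 θ0).fderiv]
  rfl

/-- First-order chain rule along the curve `t ↦ (x t, u t, t)` with basis expansion. -/
lemma curve_expand1 {n m N : ℕ} {G : ((Fin n → ℝ) × (Fin m → ℝ) × (Fin N → ℝ)) → ℝ}
    (hG : Differentiable ℝ G)
    {x : (Fin N → ℝ) → (Fin n → ℝ)} {u : (Fin N → ℝ) → (Fin m → ℝ)} {θ : Fin N → ℝ}
    (hx : DifferentiableAt ℝ x θ) (hu : DifferentiableAt ℝ u θ) (v : Fin N → ℝ) :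
    fderiv ℝ (fun t => G (x t, u t, t)) θ v
      = (∑ i, fderiv ℝ (fun t => x t i) θ v * fderiv ℝ G (x θ, u θ, θ) (Pi.single i 1, 0, 0))
      + (∑ j, fderiv ℝ (fun t => u t j) θ v * fderiv ℝ G (x θ, u θ, θ) (0, Pi.single j 1, 0))
      + fderiv ℝ G (x θ, u θ, θ) (0, 0, v) := by
  have hγ : DifferentiableAt ℝ
      (fun t => ((x t, u t, t) : (Fin n → ℝ) × (Fin m → ℝ) × (Fin N → ℝ))) θ :=
    hx.prodMk (hu.prodMk differentiableAt_id)
  have h2 : HasFDerivAt (fun t => G (x t, u t, t))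
      ((fderiv ℝ G (x θ, u θ, θ)).comp
        (fderiv ℝ (fun t => ((x t, u t, t) : (Fin n → ℝ) × (Fin m → ℝ) × (Fin N → ℝ))) θ)) θ :=
    (hG (x θ, u θ, θ)).hasFDerivAt.comp θ hγ.hasFDerivAt
  rw [h2.fderiv, ContinuousLinearMap.comp_apply, fderiv_triple hx hu, L_decomp3]
  simp only [fderiv_comp_proj x hx, fderiv_comp_proj u hu]

/-- Second-order chain rule along the curve `t ↦ (x t, u t, t)` with basis expansion. -/
lemma curve_expand {n m N : ℕ} {G : ((Fin n → ℝ) × (Fin m → ℝ) × (Fin N → ℝ)) → ℝ}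
    (hG : ContDiff ℝ 2 G)
    {x : (Fin N → ℝ) → (Fin n → ℝ)} {u : (Fin N → ℝ) → (Fin m → ℝ)} {θ : Fin N → ℝ}
    (hx : DifferentiableAt ℝ x θ) (hu : DifferentiableAt ℝ u θ)
    (w : (Fin n → ℝ) × (Fin m → ℝ) × (Fin N → ℝ)) (v : Fin N → ℝ) :
    fderiv ℝ (fun t => fderiv ℝ G (x t, u t, t) w) θ v
      = (∑ i, fderiv ℝ (fun t => x t i) θ v *
          fderiv ℝ (fun e => fderiv ℝ G e w) (x θ, u θ, θ) (Pi.single i 1, 0, 0))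
      + (∑ j, fderiv ℝ (fun t => u t j) θ v *
          fderiv ℝ (fun e => fderiv ℝ G e w) (x θ, u θ, θ) (0, Pi.single j 1, 0))
      + fderiv ℝ (fun e => fderiv ℝ G e w) (x θ, u θ, θ) (0, 0, v) := by
  have hγ : DifferentiableAt ℝ
      (fun t => ((x t, u t, t) : (Fin n → ℝ) × (Fin m → ℝ) × (Fin N → ℝ))) θ :=
    hx.prodMk (hu.prodMk differentiableAt_id)
  rw [fderiv_fderiv_comp hG _ hγ w v, fderiv_triple hx hu, L_decomp3]
  simp only [fderiv_comp_proj x hx, fderiv_comp_proj u hu]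

/-- Second-order chain rule along the curve `t ↦ (x t, t)` with basis expansion. -/
lemma curve_expand2 {n N : ℕ} {G : ((Fin n → ℝ) × (Fin N → ℝ)) → ℝ}
    (hG : ContDiff ℝ 2 G)
    {x : (Fin N → ℝ) → (Fin n → ℝ)} {θ : Fin N → ℝ}
    (hx : DifferentiableAt ℝ x θ)
    (w : (Fin n → ℝ) × (Fin N → ℝ)) (v : Fin N → ℝ) :
    fderiv ℝ (fun t => fderiv ℝ G (x t, t) w) θ v
      = (∑ i, fderiv ℝ (fun t => x t i) θ v *
          fderiv ℝ (fun e => fderiv ℝ G e w) (x θ, θ) (Pi.single i 1, 0))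
      + fderiv ℝ (fun e => fderiv ℝ G e w) (x θ, θ) (0, v) := by
  have hγ : DifferentiableAt ℝ
      (fun t => ((x t, t) : (Fin n → ℝ) × (Fin N → ℝ))) θ :=
    hx.prodMk differentiableAt_id
  rw [fderiv_fderiv_comp hG _ hγ w v, fderiv_pair hx, L_decomp2]
  simp only [fderiv_comp_proj x hx]

section Split

variable {ι : Type*} [Fintype ι] {E : Type*} [NormedAddCommGroup E] [NormedSpace ℝ E]

/-- First derivative of `C + ∑ pb i • F i`. -/
lemma fderiv_G_split (C : E → ℝ) (F : ι → E → ℝ) (pb : ι → ℝ)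
    (hC : ContDiff ℝ 2 C) (hF : ∀ i, ContDiff ℝ 2 (F i)) (q : E) (w : E) :
    fderiv ℝ (fun e => C e + ∑ i, F i e * pb i) q w
      = fderiv ℝ C q w + ∑ i, pb i * fderiv ℝ (F i) q w := by
  have hCd : DifferentiableAt ℝ C q := (hC.differentiable two_ne_zero) q
  have hFd : ∀ i, DifferentiableAt ℝ (F i) q := fun i => ((hF i).differentiable two_ne_zero) q
  have hS : DifferentiableAt ℝ (fun e => ∑ i, F i e * pb i) q :=
    DifferentiableAt.fun_sum fun i _ => (hFd i).mul_const _
  rw [fderiv_fun_add hCd hS, ContinuousLinearMap.add_apply,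
    fderiv_fun_sum (fun i _ => (hFd i).mul_const (pb i)), ContinuousLinearMap.sum_apply]
  congr 1
  refine Finset.sum_congr rfl fun i _ => ?_
  rw [fderiv_mul_const (hFd i)]
  simp [mul_comm]

/-- Second derivative (applied form) of `C + ∑ pb i • F i`. -/
lemma sfderiv_G_split (C : E → ℝ) (F : ι → E → ℝ) (pb : ι → ℝ)
    (hC : ContDiff ℝ 2 C) (hF : ∀ i, ContDiff ℝ 2 (F i)) (q : E) (w z : E) :
    fderiv ℝ (fun e => fderiv ℝ (fun e' => C e' + ∑ i, F i e' * pb i) e w) q z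
      = fderiv ℝ (fun e => fderiv ℝ C e w) q z
        + ∑ i, pb i * fderiv ℝ (fun e => fderiv ℝ (F i) e w) q z := by
  have h1 : (fun e => fderiv ℝ (fun e' => C e' + ∑ i, F i e' * pb i) e w)
      = fun e => fderiv ℝ C e w + ∑ i, pb i * fderiv ℝ (F i) e w :=
    funext fun e => fderiv_G_split C F pb hC hF e w
  rw [h1]
  have hCd : DifferentiableAt ℝ (fun e => fderiv ℝ C e w) q := (diff_fderiv_apply hC w) q
  have hFd : ∀ i, DifferentiableAt ℝ (fun e => pb i * fderiv ℝ (F i) e w) q := fun i =>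
    ((diff_fderiv_apply (hF i) w) q).const_mul _
  have hS : DifferentiableAt ℝ (fun e => ∑ i, pb i * fderiv ℝ (F i) e w) q :=
    DifferentiableAt.fun_sum fun i _ => hFd i
  rw [fderiv_fun_add hCd hS, ContinuousLinearMap.add_apply,
    fderiv_fun_sum (fun i _ => hFd i), ContinuousLinearMap.sum_apply]
  congr 1
  refine Finset.sum_congr rfl fun i _ => ?_
  rw [fderiv_const_mul ((diff_fderiv_apply (hF i) w) q)]
  simp

end Split

end PDPaux3

namespace PDPaux4

open ContinuousLinearMap PDPaux PDPaux2 PDPaux3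

variable {n m N : ℕ}

lemma Hblock_11 {G : ((Fin n → ℝ) × (Fin m → ℝ) × (Fin N → ℝ)) → ℝ} (hG : ContDiff ℝ 2 G)
    (x0 : Fin n → ℝ) (u0 : Fin m → ℝ) (θ0 : Fin N → ℝ) (w v : Fin n → ℝ) :
    fderiv ℝ (fun xv => fderiv ℝ (fun xv' => G (xv', u0, θ0)) xv w) x0 v
      = fderiv ℝ (fun e => fderiv ℝ G e (w, 0, 0)) (x0, u0, θ0) (v, 0, 0) := by
  have h1 : (fun xv => fderiv ℝ (fun xv' => G (xv', u0, θ0)) xv w)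
      = fun xv => fderiv ℝ G (xv, u0, θ0) (w, 0, 0) :=
    funext fun xv => fderiv_partial1 (hG.differentiable two_ne_zero) xv u0 θ0 w
  have hγ : DifferentiableAt ℝ (fun xv : Fin n → ℝ =>
      ((xv, u0, θ0) : (Fin n → ℝ) × (Fin m → ℝ) × (Fin N → ℝ))) x0 :=
    (hasFDerivAt_prodMk_left (𝕜 := ℝ) x0 (u0, θ0)).differentiableAt
  rw [h1, fderiv_fderiv_comp hG _ hγ (w, 0, 0) v, fderiv_sect1]

lemma Hblock_21 {G : ((Fin n → ℝ) × (Fin m → ℝ) × (Fin N → ℝ)) → ℝ} (hG : ContDiff ℝ 2 G)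
    (x0 : Fin n → ℝ) (u0 : Fin m → ℝ) (θ0 : Fin N → ℝ) (w : Fin m → ℝ) (v : Fin n → ℝ) :
    fderiv ℝ (fun xv => fderiv ℝ (fun uv => G (xv, uv, θ0)) u0 w) x0 v
      = fderiv ℝ (fun e => fderiv ℝ G e (0, w, 0)) (x0, u0, θ0) (v, 0, 0) := by
  have h1 : (fun xv => fderiv ℝ (fun uv => G (xv, uv, θ0)) u0 w)
      = fun xv => fderiv ℝ G (xv, u0, θ0) (0, w, 0) :=
    funext fun xv => fderiv_partial2 (hG.differentiable two_ne_zero) xv u0 θ0 w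
  have hγ : DifferentiableAt ℝ (fun xv : Fin n → ℝ =>
      ((xv, u0, θ0) : (Fin n → ℝ) × (Fin m → ℝ) × (Fin N → ℝ))) x0 :=
    (hasFDerivAt_prodMk_left (𝕜 := ℝ) x0 (u0, θ0)).differentiableAt
  rw [h1, fderiv_fderiv_comp hG _ hγ (0, w, 0) v, fderiv_sect1]

lemma Hblock_22 {G : ((Fin n → ℝ) × (Fin m → ℝ) × (Fin N → ℝ)) → ℝ} (hG : ContDiff ℝ 2 G)
    (x0 : Fin n → ℝ) (u0 : Fin m → ℝ) (θ0 : Fin N → ℝ) (w v : Fin m → ℝ) :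
    fderiv ℝ (fun uv => fderiv ℝ (fun uv' => G (x0, uv', θ0)) uv w) u0 v
      = fderiv ℝ (fun e => fderiv ℝ G e (0, w, 0)) (x0, u0, θ0) (0, v, 0) := by
  have h1 : (fun uv => fderiv ℝ (fun uv' => G (x0, uv', θ0)) uv w)
      = fun uv => fderiv ℝ G (x0, uv, θ0) (0, w, 0) :=
    funext fun uv => fderiv_partial2 (hG.differentiable two_ne_zero) x0 uv θ0 w
  have hγ : DifferentiableAt ℝ (fun uv : Fin m → ℝ =>
      ((x0, uv, θ0) : (Fin n → ℝ) × (Fin m → ℝ) × (Fin N → ℝ))) u0 := by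
    exact (differentiableAt_const x0).prodMk (differentiableAt_id.prodMk (differentiableAt_const θ0))
  rw [h1, fderiv_fderiv_comp hG _ hγ (0, w, 0) v, fderiv_sect2]

lemma Hblock_13 {G : ((Fin n → ℝ) × (Fin m → ℝ) × (Fin N → ℝ)) → ℝ} (hG : ContDiff ℝ 2 G)
    (x0 : Fin n → ℝ) (u0 : Fin m → ℝ) (θ0 : Fin N → ℝ) (w : Fin n → ℝ) (v : Fin N → ℝ) :
    fderiv ℝ (fun θv => fderiv ℝ (fun xv => G (xv, u0, θv)) x0 w) θ0 v
      = fderiv ℝ (fun e => fderiv ℝ G e (w, 0, 0)) (x0, u0, θ0) (0, 0, v) := by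
  have h1 : (fun θv => fderiv ℝ (fun xv => G (xv, u0, θv)) x0 w)
      = fun θv => fderiv ℝ G (x0, u0, θv) (w, 0, 0) :=
    funext fun θv => fderiv_partial1 (hG.differentiable two_ne_zero) x0 u0 θv w
  have hγ : DifferentiableAt ℝ (fun θv : Fin N → ℝ =>
      ((x0, u0, θv) : (Fin n → ℝ) × (Fin m → ℝ) × (Fin N → ℝ))) θ0 :=
    (differentiableAt_const x0).prodMk ((differentiableAt_const u0).prodMk differentiableAt_id)
  rw [h1, fderiv_fderiv_comp hG _ hγ (w, 0, 0) v, fderiv_sect3]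

lemma Hblock_23 {G : ((Fin n → ℝ) × (Fin m → ℝ) × (Fin N → ℝ)) → ℝ} (hG : ContDiff ℝ 2 G)
    (x0 : Fin n → ℝ) (u0 : Fin m → ℝ) (θ0 : Fin N → ℝ) (w : Fin m → ℝ) (v : Fin N → ℝ) :
    fderiv ℝ (fun θv => fderiv ℝ (fun uv => G (x0, uv, θv)) u0 w) θ0 v
      = fderiv ℝ (fun e => fderiv ℝ G e (0, w, 0)) (x0, u0, θ0) (0, 0, v) := by
  have h1 : (fun θv => fderiv ℝ (fun uv => G (x0, uv, θv)) u0 w)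
      = fun θv => fderiv ℝ G (x0, u0, θv) (0, w, 0) :=
    funext fun θv => fderiv_partial2 (hG.differentiable two_ne_zero) x0 u0 θv w
  have hγ : DifferentiableAt ℝ (fun θv : Fin N → ℝ =>
      ((x0, u0, θv) : (Fin n → ℝ) × (Fin m → ℝ) × (Fin N → ℝ))) θ0 :=
    (differentiableAt_const x0).prodMk ((differentiableAt_const u0).prodMk differentiableAt_id)
  rw [h1, fderiv_fderiv_comp hG _ hγ (0, w, 0) v, fderiv_sect3]

lemma Hblock2_11 {G : ((Fin n → ℝ) × (Fin N → ℝ)) → ℝ} (hG : ContDiff ℝ 2 G)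
    (x0 : Fin n → ℝ) (θ0 : Fin N → ℝ) (w v : Fin n → ℝ) :
    fderiv ℝ (fun xv => fderiv ℝ (fun xv' => G (xv', θ0)) xv w) x0 v
      = fderiv ℝ (fun e => fderiv ℝ G e (w, 0)) (x0, θ0) (v, 0) := by
  have h1 : (fun xv => fderiv ℝ (fun xv' => G (xv', θ0)) xv w)
      = fun xv => fderiv ℝ G (xv, θ0) (w, 0) :=
    funext fun xv => fderiv2_partial1 (hG.differentiable two_ne_zero) xv θ0 w
  have hγ : DifferentiableAt ℝ (fun xv : Fin n → ℝ =>
      ((xv, θ0) : (Fin n → ℝ) × (Fin N → ℝ))) x0 :=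
    differentiableAt_id.prodMk (differentiableAt_const θ0)
  rw [h1, fderiv_fderiv_comp hG _ hγ (w, 0) v, fderiv2_sect1]

lemma Hblock2_12 {G : ((Fin n → ℝ) × (Fin N → ℝ)) → ℝ} (hG : ContDiff ℝ 2 G)
    (x0 : Fin n → ℝ) (θ0 : Fin N → ℝ) (w : Fin n → ℝ) (v : Fin N → ℝ) :
    fderiv ℝ (fun θv => fderiv ℝ (fun xv => G (xv, θv)) x0 w) θ0 v
      = fderiv ℝ (fun e => fderiv ℝ G e (w, 0)) (x0, θ0) (0, v) := by
  have h1 : (fun θv => fderiv ℝ (fun xv => G (xv, θv)) x0 w)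
      = fun θv => fderiv ℝ G (x0, θv) (w, 0) :=
    funext fun θv => fderiv2_partial1 (hG.differentiable two_ne_zero) x0 θv w
  have hγ : DifferentiableAt ℝ (fun θv : Fin N → ℝ =>
      ((x0, θv) : (Fin n → ℝ) × (Fin N → ℝ))) θ0 :=
    (differentiableAt_const x0).prodMk differentiableAt_id
  rw [h1, fderiv_fderiv_comp hG _ hγ (w, 0) v, fderiv2_sect2]

end PDPaux4

namespace PDPaux5

open ContinuousLinearMap PDPaux PDPaux2 PDPaux3 PDPaux4

lemma combine_alg {n m : ℕ} (SC1 : Fin n → ℝ) (SC2 : Fin m → ℝ) (SC3 : ℝ)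
    (SF1 : Fin n → Fin n → ℝ) (SF2 : Fin n → Fin m → ℝ) (SF3 : Fin n → ℝ)
    (P D : Fin n → ℝ) (xD : Fin n → ℝ) (uD : Fin m → ℝ) (FW : Fin n → ℝ) :
    ((∑ i, xD i * SC1 i) + (∑ j, uD j * SC2 j) + SC3)
      + ∑ i', (P i' * ((∑ i, xD i * SF1 i' i) + (∑ j, uD j * SF2 i' j) + SF3 i')
          + D i' * FW i')
    = (∑ i, xD i * (SC1 i + ∑ i', P i' * SF1 i' i))
      + (∑ j, uD j * (SC2 j + ∑ i', P i' * SF2 i' j))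
      + (SC3 + ∑ i', P i' * SF3 i')
      + ∑ i', D i' * FW i' := by
  simp only [mul_add, Finset.mul_sum, Finset.sum_add_distrib]
  rw [Finset.sum_comm (γ := Fin n) (s := Finset.univ) (t := Finset.univ)
    (f := fun i' i => P i' * (xD i * SF1 i' i)),
    Finset.sum_comm (s := Finset.univ) (t := Finset.univ)
    (f := fun i' j => P i' * (uD j * SF2 i' j))]
  ring_nf
  simp only [mul_comm (P _) (xD _), mul_comm (P _) (uD _)]
  ring

/-- Differentiating a Pontryagin-type expression
`t ↦ ∂C(x t, u t, t)[w] + ∑ i' p t i' ∂F i' (x t, u t, t)[w]` at `θ`. -/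
lemma pontryagin_diff {n m N : ℕ}
    (C : ((Fin n → ℝ) × (Fin m → ℝ) × (Fin N → ℝ)) → ℝ)
    (F : Fin n → ((Fin n → ℝ) × (Fin m → ℝ) × (Fin N → ℝ)) → ℝ)
    (hC : ContDiff ℝ 2 C) (hF : ∀ i', ContDiff ℝ 2 (F i'))
    {x : (Fin N → ℝ) → (Fin n → ℝ)} {u : (Fin N → ℝ) → (Fin m → ℝ)}
    {pp : (Fin N → ℝ) → (Fin n → ℝ)} {θ : Fin N → ℝ}
    (hx : DifferentiableAt ℝ x θ) (hu : DifferentiableAt ℝ u θ)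
    (hpp : DifferentiableAt ℝ pp θ)
    (w : (Fin n → ℝ) × (Fin m → ℝ) × (Fin N → ℝ)) (v : Fin N → ℝ) :
    fderiv ℝ (fun t => fderiv ℝ C (x t, u t, t) w
        + ∑ i', pp t i' * fderiv ℝ (F i') (x t, u t, t) w) θ v
      = (∑ i, fderiv ℝ (fun t => x t i) θ v *
          fderiv ℝ (fun e => fderiv ℝ (fun e' => C e' + ∑ i', F i' e' * pp θ i') e w)
            (x θ, u θ, θ) (Pi.single i 1, 0, 0))
      + (∑ j, fderiv ℝ (fun t => u t j) θ v *
          fderiv ℝ (fun e => fderiv ℝ (fun e' => C e' + ∑ i', F i' e' * pp θ i') e w)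
            (x θ, u θ, θ) (0, Pi.single j 1, 0))
      + fderiv ℝ (fun e => fderiv ℝ (fun e' => C e' + ∑ i', F i' e' * pp θ i') e w)
            (x θ, u θ, θ) (0, 0, v)
      + ∑ i', fderiv ℝ (fun t => pp t i') θ v * fderiv ℝ (F i') (x θ, u θ, θ) w := by
  have hγ : DifferentiableAt ℝ
      (fun t => ((x t, u t, t) : (Fin n → ℝ) × (Fin m → ℝ) × (Fin N → ℝ))) θ :=
    hx.prodMk (hu.prodMk differentiableAt_id)
  have h1 : DifferentiableAt ℝ (fun t => fderiv ℝ C (x t, u t, t) w) θ :=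
    (diff_fderiv_apply hC w (x θ, u θ, θ)).fun_comp' θ hγ
  have h2 : ∀ i' : Fin n, DifferentiableAt ℝ (fun t => fderiv ℝ (F i') (x t, u t, t) w) θ :=
    fun i' => (diff_fderiv_apply (hF i') w (x θ, u θ, θ)).fun_comp' θ hγ
  have h3 : ∀ i' : Fin n, DifferentiableAt ℝ (fun t => pp t i') θ :=
    fun i' => diff_comp_proj pp hpp i'
  have hsum : DifferentiableAt ℝ
      (fun t => ∑ i', pp t i' * fderiv ℝ (F i') (x t, u t, t) w) θ :=
    DifferentiableAt.fun_sum fun i' _ => (h3 i').mul (h2 i')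
  rw [fderiv_fun_add h1 hsum, ContinuousLinearMap.add_apply,
    fderiv_fun_sum (A := fun i' t => pp t i' * fderiv ℝ (F i') (x t, u t, t) w)
      (fun i' _ => (h3 i').mul (h2 i')), ContinuousLinearMap.sum_apply]
  have hprod : ∀ i' : Fin n,
      fderiv ℝ (fun t => pp t i' * fderiv ℝ (F i') (x t, u t, t) w) θ v
        = pp θ i' * fderiv ℝ (fun t => fderiv ℝ (F i') (x t, u t, t) w) θ v
          + fderiv ℝ (fun t => pp t i') θ v * fderiv ℝ (F i') (x θ, u θ, θ) w := by
    intro i'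
    rw [fderiv_fun_mul (h3 i') (h2 i')]
    simp [mul_comm]
  simp only [hprod]
  rw [curve_expand hC hx hu w v]
  have hFexp : ∀ i' : Fin n,
      fderiv ℝ (fun t => fderiv ℝ (F i') (x t, u t, t) w) θ v
        = (∑ i, fderiv ℝ (fun t => x t i) θ v *
            fderiv ℝ (fun e => fderiv ℝ (F i') e w) (x θ, u θ, θ) (Pi.single i 1, 0, 0))
          + (∑ j, fderiv ℝ (fun t => u t j) θ v *
            fderiv ℝ (fun e => fderiv ℝ (F i') e w) (x θ, u θ, θ) (0, Pi.single j 1, 0))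
          + fderiv ℝ (fun e => fderiv ℝ (F i') e w) (x θ, u θ, θ) (0, 0, v) :=
    fun i' => curve_expand (hF i') hx hu w v
  simp only [hFexp]
  simp only [sfderiv_G_split C F (pp θ) hC hF (x θ, u θ, θ) w]
  exact combine_alg _ _ _ _ _ _ _ _ _ _ _

end PDPaux5

open PDPaux PDPaux2 PDPaux3 PDPaux4 PDPaux5

/-- **Proposition 1 (trajectory derivatives via Pontryagin differentiable programming).**
Suppose maps `θ ↦ x_k(θ)`, `θ ↦ u_k(θ)`, `θ ↦ p_k(θ)` are differentiable at `θ̄` and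
satisfy, for all `θ` in a neighborhood of `θ̄`, the discrete-time Pontryagin conditions.
Let `A_k, B_k` be the Jacobians of `f` and `H_k^{xx}, H_k^{xu} = (H_k^{ux})ᵀ, H_k^{uu},
H_k^{xe}, H_k^{ue}, H_T^{xx}, H_T^{xe}` the second derivatives of the Hamiltonian `H` and
of `c_T` along `(x_k(θ̄), u_k(θ̄), p_{k+1}(θ̄), θ̄)`.  Assume `H_k^{uu}` and
`I + 𝒫_{k+1}ℛ_k` are invertible for all `k = 0,…,T−1`, where `𝒫, 𝒲` are given by the
backward Riccati recursions.  Then the Jacobians `∂x_k/∂θ(θ̄)` and `∂u_k/∂θ(θ̄)` are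
exactly the matrices `X_k, U_k` generated forward by `X_0 = 0`,
`U_k = −(H_k^{uu})⁻¹(H_k^{ux}X_k + H_k^{ue} + B_kᵀ(I + 𝒫_{k+1}ℛ_k)⁻¹(𝒫_{k+1}𝒜_kX_k +
𝒫_{k+1}ℳ_k + 𝒲_{k+1}))`, `X_{k+1} = A_kX_k + B_kU_k`. -/
theorem pdp_trajectory_derivatives
    {n m N : ℕ} {T : ℕ} (hT : 1 ≤ T)
    (f : (Fin n → ℝ) → (Fin m → ℝ) → (Fin n → ℝ))
    (c : ℕ → (Fin n → ℝ) → (Fin m → ℝ) → (Fin N → ℝ) → ℝ)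
    (cT : (Fin n → ℝ) → (Fin N → ℝ) → ℝ)
    (hf : ContDiff ℝ 2 (fun q : (Fin n → ℝ) × (Fin m → ℝ) => f q.1 q.2))
    (hc : ∀ t, ContDiff ℝ 2
      (fun q : (Fin n → ℝ) × (Fin m → ℝ) × (Fin N → ℝ) => c t q.1 q.2.1 q.2.2))
    (hcT : ContDiff ℝ 2 (fun q : (Fin n → ℝ) × (Fin N → ℝ) => cT q.1 q.2))
    -- the Hamiltonian `H(k, x, u, p, θ) = c_k(x, u, θ) + f(x, u)ᵀ p`
    (Ham : ℕ → (Fin n → ℝ) → (Fin m → ℝ) → (Fin n → ℝ) → (Fin N → ℝ) → ℝ)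
    (hHam : ∀ k xv uv pv θv,
      Ham k xv uv pv θv = c k xv uv θv + ∑ i, f xv uv i * pv i)
    (x₀ : Fin n → ℝ) (θbar : Fin N → ℝ)
    -- the parameterized trajectories and costates
    (x : ℕ → (Fin N → ℝ) → (Fin n → ℝ))
    (u : ℕ → (Fin N → ℝ) → (Fin m → ℝ))
    (p : ℕ → (Fin N → ℝ) → (Fin n → ℝ))
    -- differentiability at θ̄
    (hxdiff : ∀ k ≤ T, DifferentiableAt ℝ (x k) θbar)
    (hudiff : ∀ k < T, DifferentiableAt ℝ (u k) θbar)
    (hpdiff : ∀ k, 1 ≤ k → k ≤ T → DifferentiableAt ℝ (p k) θbar)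
    -- the Pontryagin conditions hold for all `θ` in a neighborhood of `θ̄`
    (hpontryagin : ∀ᶠ θ in nhds θbar,
      (x 0 θ = x₀) ∧
      (∀ k < T, x (k + 1) θ = f (x k θ) (u k θ)) ∧
      (∀ k, 1 ≤ k → k < T → p k θ = fun i =>
        fderiv ℝ (fun xv => c k xv (u k θ) θ) (x k θ) (Pi.single i 1) +
        ∑ i', p (k + 1) θ i' *
          fderiv ℝ (fun xv => f xv (u k θ) i') (x k θ) (Pi.single i 1)) ∧
      (∀ k < T, ∀ j : Fin m,
        fderiv ℝ (fun uv => c k (x k θ) uv θ) (u k θ) (Pi.single j 1) +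
          ∑ i', p (k + 1) θ i' *
            fderiv ℝ (fun uv => f (x k θ) uv i') (u k θ) (Pi.single j 1) = 0) ∧
      (p T θ = fun i => fderiv ℝ (fun xv => cT xv θ) (x T θ) (Pi.single i 1)))
    -- the Jacobians of `f` at `(x_k(θ̄), u_k(θ̄))`
    (A : ℕ → Matrix (Fin n) (Fin n) ℝ)
    (hA : ∀ k, A k = Matrix.of fun i j =>
      fderiv ℝ (fun xv => f xv (u k θbar) i) (x k θbar) (Pi.single j 1))
    (B : ℕ → Matrix (Fin n) (Fin m) ℝ)
    (hB : ∀ k, B k = Matrix.of fun i j =>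
      fderiv ℝ (fun uv => f (x k θbar) uv i) (u k θbar) (Pi.single j 1))
    -- the second-derivative blocks of the Hamiltonian at
    -- `(k, x_k(θ̄), u_k(θ̄), p_{k+1}(θ̄), θ̄)`
    (Hxx : ℕ → Matrix (Fin n) (Fin n) ℝ)
    (hHxx : ∀ k, Hxx k = Matrix.of fun i j =>
      fderiv ℝ (fun xv => fderiv ℝ
          (fun xv' => Ham k xv' (u k θbar) (p (k + 1) θbar) θbar) xv (Pi.single i 1))
        (x k θbar) (Pi.single j 1))
    (Hux : ℕ → Matrix (Fin m) (Fin n) ℝ)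
    (hHux : ∀ k, Hux k = Matrix.of fun j i =>
      fderiv ℝ (fun xv => fderiv ℝ
          (fun uv => Ham k xv uv (p (k + 1) θbar) θbar) (u k θbar) (Pi.single j 1))
        (x k θbar) (Pi.single i 1))
    (Huu : ℕ → Matrix (Fin m) (Fin m) ℝ)
    (hHuu : ∀ k, Huu k = Matrix.of fun j j' =>
      fderiv ℝ (fun uv => fderiv ℝ
          (fun uv' => Ham k (x k θbar) uv' (p (k + 1) θbar) θbar) uv (Pi.single j 1))
        (u k θbar) (Pi.single j' 1))
    (Hxe : ℕ → Matrix (Fin n) (Fin N) ℝ)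
    (hHxe : ∀ k, Hxe k = Matrix.of fun i a =>
      fderiv ℝ (fun θv => fderiv ℝ
          (fun xv => Ham k xv (u k θbar) (p (k + 1) θbar) θv) (x k θbar) (Pi.single i 1))
        θbar (Pi.single a 1))
    (Hue : ℕ → Matrix (Fin m) (Fin N) ℝ)
    (hHue : ∀ k, Hue k = Matrix.of fun j a =>
      fderiv ℝ (fun θv => fderiv ℝ
          (fun uv => Ham k (x k θbar) uv (p (k + 1) θbar) θv) (u k θbar) (Pi.single j 1))
        θbar (Pi.single a 1))
    -- the second-derivative blocks of the terminal cost at `(x_T(θ̄), θ̄)`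
    (HTxx : Matrix (Fin n) (Fin n) ℝ)
    (hHTxx : HTxx = Matrix.of fun i j =>
      fderiv ℝ (fun xv => fderiv ℝ (fun xv' => cT xv' θbar) xv (Pi.single i 1))
        (x T θbar) (Pi.single j 1))
    (HTxe : Matrix (Fin n) (Fin N) ℝ)
    (hHTxe : HTxe = Matrix.of fun i a =>
      fderiv ℝ (fun θv => fderiv ℝ (fun xv => cT xv θv) (x T θbar) (Pi.single i 1))
        θbar (Pi.single a 1))
    -- abbreviations 𝒜, ℛ, ℳ, 𝒬, 𝒩
    (cA : ℕ → Matrix (Fin n) (Fin n) ℝ)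
    (hcA : ∀ k, cA k = A k - B k * (Huu k)⁻¹ * Hux k)
    (cR : ℕ → Matrix (Fin n) (Fin n) ℝ)
    (hcR : ∀ k, cR k = B k * (Huu k)⁻¹ * (B k)ᵀ)
    (cM : ℕ → Matrix (Fin n) (Fin N) ℝ)
    (hcM : ∀ k, cM k = -(B k * (Huu k)⁻¹ * Hue k))
    (cQ : ℕ → Matrix (Fin n) (Fin n) ℝ)
    (hcQ : ∀ k, cQ k = Hxx k - (Hux k)ᵀ * (Huu k)⁻¹ * Hux k)
    (cN : ℕ → Matrix (Fin n) (Fin N) ℝ)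
    (hcN : ∀ k, cN k = Hxe k - (Hux k)ᵀ * (Huu k)⁻¹ * Hue k)
    -- backward Riccati recursions for 𝒫 and 𝒲
    (cP : ℕ → Matrix (Fin n) (Fin n) ℝ) (cW : ℕ → Matrix (Fin n) (Fin N) ℝ)
    (hcPT : cP T = HTxx) (hcWT : cW T = HTxe)
    (hcP : ∀ k < T, cP k =
      cQ k + (cA k)ᵀ * (1 + cP (k + 1) * cR k)⁻¹ * (cP (k + 1) * cA k))
    (hcW : ∀ k < T, cW k =
      (cA k)ᵀ * (1 + cP (k + 1) * cR k)⁻¹ * (cW (k + 1) + cP (k + 1) * cM k) + cN k)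
    -- invertibility assumptions
    (hHuuInv : ∀ k < T, IsUnit (Huu k))
    (hIPR : ∀ k < T, IsUnit (1 + cP (k + 1) * cR k))
    -- the matrices generated by the forward recursion
    (X : ℕ → Matrix (Fin n) (Fin N) ℝ) (U : ℕ → Matrix (Fin m) (Fin N) ℝ)
    (hX0 : X 0 = 0)
    (hU : ∀ k < T, U k =
      -((Huu k)⁻¹ * (Hux k * X k + Hue k + (B k)ᵀ * (1 + cP (k + 1) * cR k)⁻¹ *
        (cP (k + 1) * cA k * X k + cP (k + 1) * cM k + cW (k + 1)))))
    (hX : ∀ k < T, X (k + 1) = A k * X k + B k * U k) :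
    -- the Jacobians ∂x_k/∂θ(θ̄) and ∂u_k/∂θ(θ̄) are exactly X_k and U_k
    (∀ k ≤ T, X k = Matrix.of fun i a =>
      fderiv ℝ (fun θv => x k θv i) θbar (Pi.single a 1)) ∧
    (∀ k < T, U k = Matrix.of fun j a =>
      fderiv ℝ (fun θv => u k θv j) θbar (Pi.single a 1)) := by
  classical
  -- derivative matrices of the trajectories
  set Dx : ℕ → Matrix (Fin n) (Fin N) ℝ :=
    fun k => Matrix.of fun i a => fderiv ℝ (fun θv => x k θv i) θbar (Pi.single a 1)
    with hDxdef
  set Du : ℕ → Matrix (Fin m) (Fin N) ℝ :=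
    fun k => Matrix.of fun j a => fderiv ℝ (fun θv => u k θv j) θbar (Pi.single a 1)
    with hDudef
  set Dp : ℕ → Matrix (Fin n) (Fin N) ℝ :=
    fun k => Matrix.of fun i a => fderiv ℝ (fun θv => p k θv i) θbar (Pi.single a 1)
    with hDpdef
  -- smoothness facts
  have hπ : ContDiff ℝ 2 (fun q : (Fin n → ℝ) × (Fin m → ℝ) × (Fin N → ℝ) =>
      ((q.1, q.2.1) : (Fin n → ℝ) × (Fin m → ℝ))) :=
    contDiff_fst.prodMk (contDiff_fst.comp contDiff_snd)
  have hF3 : ∀ i' : Fin n, ContDiff ℝ 2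
      (fun q : (Fin n → ℝ) × (Fin m → ℝ) × (Fin N → ℝ) => f q.1 q.2.1 i') := fun i' =>
    (ContinuousLinearMap.proj (R := ℝ) (φ := fun _ : Fin n => ℝ) i').contDiff.comp
      (hf.comp hπ)
  have hGk : ∀ k : ℕ, ContDiff ℝ 2
      (fun e' : (Fin n → ℝ) × (Fin m → ℝ) × (Fin N → ℝ) =>
        c k e'.1 e'.2.1 e'.2.2 + ∑ i', f e'.1 e'.2.1 i' * p (k + 1) θbar i') := fun k =>
    (hc k).add (ContDiff.sum fun i' _ => (hF3 i').mul contDiff_const)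
  -- eventual componentwise Pontryagin facts
  have hEx0 : ∀ i : Fin n, (fun θ => x 0 θ i) =ᶠ[nhds θbar] (fun _ => x₀ i) :=
    fun i => hpontryagin.mono fun θ h => congrFun h.1 i
  have hEdyn : ∀ k, k < T → ∀ i : Fin n,
      (fun θ => x (k + 1) θ i) =ᶠ[nhds θbar] (fun θ => f (x k θ) (u k θ) i) :=
    fun k hk i => hpontryagin.mono fun θ h => congrFun (h.2.1 k hk) i
  have hEstat : ∀ k, k < T → ∀ j : Fin m,
      (fun θ => fderiv ℝ (fun uv => c k (x k θ) uv θ) (u k θ) (Pi.single j 1) +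
        ∑ i', p (k + 1) θ i' *
          fderiv ℝ (fun uv => f (x k θ) uv i') (u k θ) (Pi.single j 1))
        =ᶠ[nhds θbar] (fun _ => (0:ℝ)) :=
    fun k hk j => hpontryagin.mono fun θ h => h.2.2.2.1 k hk j
  have hEcos : ∀ k, 1 ≤ k → k < T → ∀ i : Fin n,
      (fun θ => p k θ i) =ᶠ[nhds θbar]
        (fun θ => fderiv ℝ (fun xv => c k xv (u k θ) θ) (x k θ) (Pi.single i 1) +
          ∑ i', p (k + 1) θ i' *
            fderiv ℝ (fun xv => f xv (u k θ) i') (x k θ) (Pi.single i 1)) :=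
    fun k h1 hk i => hpontryagin.mono fun θ h => congrFun (h.2.2.1 k h1 hk) i
  have hEterm : ∀ i : Fin n, (fun θ => p T θ i) =ᶠ[nhds θbar]
      (fun θ => fderiv ℝ (fun xv => cT xv θ) (x T θ) (Pi.single i 1)) :=
    fun i => hpontryagin.mono fun θ h => congrFun h.2.2.2.2 i
  -- F0 : Dx 0 = 0
  have hDx0 : Dx 0 = 0 := by
    ext i a
    rw [hDxdef]
    simp only [Matrix.of_apply, Matrix.zero_apply]
    rw [Filter.EventuallyEq.fderiv_eq (hEx0 i)]
    simp
  -- F1 : the linearized dynamics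
  have hF1 : ∀ k, k < T → Dx (k + 1) = A k * Dx k + B k * Du k := by
    intro k hk
    ext i a
    simp only [Matrix.add_apply, Matrix.mul_apply]
    have hL : Dx (k + 1) i a
        = fderiv ℝ (fun θ => f (x k θ) (u k θ) i) θbar (Pi.single a 1) := by
      rw [hDxdef]
      simp only [Matrix.of_apply]
      rw [Filter.EventuallyEq.fderiv_eq (hEdyn k hk i)]
    rw [hL]
    have hc1 : fderiv ℝ (fun θ => f (x k θ) (u k θ) i) θbar (Pi.single a 1)
        = fderiv ℝ (fun θ => (fun q : (Fin n → ℝ) × (Fin m → ℝ) × (Fin N → ℝ) =>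
            f q.1 q.2.1 i) (x k θ, u k θ, θ)) θbar (Pi.single a 1) := rfl
    rw [hc1, curve_expand1 ((hF3 i).differentiable two_ne_zero)
      (hxdiff k hk.le) (hudiff k hk) (Pi.single a 1)]
    have hA' : ∀ i'' : Fin n,
        fderiv ℝ (fun q : (Fin n → ℝ) × (Fin m → ℝ) × (Fin N → ℝ) => f q.1 q.2.1 i)
          (x k θbar, u k θbar, θbar) (Pi.single i'' 1, 0, 0) = A k i i'' := by
      intro i''
      rw [hA]
      simp only [Matrix.of_apply]
      exact (fderiv_partial1 ((hF3 i).differentiable two_ne_zero) _ _ _ _).symm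
    have hB' : ∀ j : Fin m,
        fderiv ℝ (fun q : (Fin n → ℝ) × (Fin m → ℝ) × (Fin N → ℝ) => f q.1 q.2.1 i)
          (x k θbar, u k θbar, θbar) (0, Pi.single j 1, 0) = B k i j := by
      intro j
      rw [hB]
      simp only [Matrix.of_apply]
      exact (fderiv_partial2 ((hF3 i).differentiable two_ne_zero) _ _ _ _).symm
    have hθ0 : fderiv ℝ (fun q : (Fin n → ℝ) × (Fin m → ℝ) × (Fin N → ℝ) => f q.1 q.2.1 i)
        (x k θbar, u k θbar, θbar) (0, 0, Pi.single a 1) = 0 := by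
      have h3 := fderiv_partial3 (G := fun q : (Fin n → ℝ) × (Fin m → ℝ) × (Fin N → ℝ) =>
        f q.1 q.2.1 i) ((hF3 i).differentiable two_ne_zero) (x k θbar) (u k θbar) θbar
        (Pi.single a 1)
      rw [← h3]
      have : (fun θv : Fin N → ℝ => f (x k θbar) (u k θbar) i)
          = fun _ => f (x k θbar) (u k θbar) i := rfl
      rw [this]
      simp
    rw [hθ0, add_zero]
    simp only [hA', hB', hDxdef, hDudef, Matrix.of_apply]
    congr 1 <;> exact Finset.sum_congr rfl fun _ _ => mul_comm _ _

  -- Hessian block identifications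
  have hHxxE : ∀ (k : ℕ) (i i'' : Fin n), Hxx k i i''
      = fderiv ℝ (fun e => fderiv ℝ
          (fun e' : (Fin n → ℝ) × (Fin m → ℝ) × (Fin N → ℝ) =>
            c k e'.1 e'.2.1 e'.2.2 + ∑ i', f e'.1 e'.2.1 i' * p (k + 1) θbar i')
          e (Pi.single i 1, 0, 0)) (x k θbar, u k θbar, θbar) (Pi.single i'' 1, 0, 0) := by
    intro k i i''
    rw [hHxx]
    simp only [Matrix.of_apply]
    rw [show (fun xv' => Ham k xv' (u k θbar) (p (k + 1) θbar) θbar)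
        = (fun xv' => (fun e' : (Fin n → ℝ) × (Fin m → ℝ) × (Fin N → ℝ) =>
            c k e'.1 e'.2.1 e'.2.2 + ∑ i', f e'.1 e'.2.1 i' * p (k + 1) θbar i')
          (xv', u k θbar, θbar)) from funext fun xv' => by rw [hHam]]
    exact Hblock_11 (hGk k) _ _ _ _ _
  have hHuxE : ∀ (k : ℕ) (j : Fin m) (i : Fin n), Hux k j i
      = fderiv ℝ (fun e => fderiv ℝ
          (fun e' : (Fin n → ℝ) × (Fin m → ℝ) × (Fin N → ℝ) =>
            c k e'.1 e'.2.1 e'.2.2 + ∑ i', f e'.1 e'.2.1 i' * p (k + 1) θbar i')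
          e (0, Pi.single j 1, 0)) (x k θbar, u k θbar, θbar) (Pi.single i 1, 0, 0) := by
    intro k j i
    rw [hHux]
    simp only [Matrix.of_apply]
    rw [show (fun xv => fderiv ℝ
          (fun uv => Ham k xv uv (p (k + 1) θbar) θbar) (u k θbar) (Pi.single j 1))
        = (fun xv => fderiv ℝ (fun uv => (fun e' : (Fin n → ℝ) × (Fin m → ℝ) × (Fin N → ℝ) =>
            c k e'.1 e'.2.1 e'.2.2 + ∑ i', f e'.1 e'.2.1 i' * p (k + 1) θbar i')
          (xv, uv, θbar)) (u k θbar) (Pi.single j 1)) from funext fun xv => by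
        rw [show (fun uv => Ham k xv uv (p (k + 1) θbar) θbar)
          = (fun uv => (fun e' : (Fin n → ℝ) × (Fin m → ℝ) × (Fin N → ℝ) =>
            c k e'.1 e'.2.1 e'.2.2 + ∑ i', f e'.1 e'.2.1 i' * p (k + 1) θbar i')
          (xv, uv, θbar)) from funext fun uv => by rw [hHam]]]
    exact Hblock_21 (hGk k) _ _ _ _ _
  have hHuuE : ∀ (k : ℕ) (j j' : Fin m), Huu k j j'
      = fderiv ℝ (fun e => fderiv ℝ
          (fun e' : (Fin n → ℝ) × (Fin m → ℝ) × (Fin N → ℝ) =>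
            c k e'.1 e'.2.1 e'.2.2 + ∑ i', f e'.1 e'.2.1 i' * p (k + 1) θbar i')
          e (0, Pi.single j 1, 0)) (x k θbar, u k θbar, θbar) (0, Pi.single j' 1, 0) := by
    intro k j j'
    rw [hHuu]
    simp only [Matrix.of_apply]
    rw [show (fun uv' => Ham k (x k θbar) uv' (p (k + 1) θbar) θbar)
        = (fun uv' => (fun e' : (Fin n → ℝ) × (Fin m → ℝ) × (Fin N → ℝ) =>
            c k e'.1 e'.2.1 e'.2.2 + ∑ i', f e'.1 e'.2.1 i' * p (k + 1) θbar i')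
          (x k θbar, uv', θbar)) from funext fun uv' => by rw [hHam]]
    exact Hblock_22 (hGk k) _ _ _ _ _
  have hHxeE : ∀ (k : ℕ) (i : Fin n) (a : Fin N), Hxe k i a
      = fderiv ℝ (fun e => fderiv ℝ
          (fun e' : (Fin n → ℝ) × (Fin m → ℝ) × (Fin N → ℝ) =>
            c k e'.1 e'.2.1 e'.2.2 + ∑ i', f e'.1 e'.2.1 i' * p (k + 1) θbar i')
          e (Pi.single i 1, 0, 0)) (x k θbar, u k θbar, θbar) (0, 0, Pi.single a 1) := by
    intro k i a
    rw [hHxe]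
    simp only [Matrix.of_apply]
    rw [show (fun θv => fderiv ℝ
          (fun xv => Ham k xv (u k θbar) (p (k + 1) θbar) θv) (x k θbar) (Pi.single i 1))
        = (fun θv => fderiv ℝ (fun xv => (fun e' : (Fin n → ℝ) × (Fin m → ℝ) × (Fin N → ℝ) =>
            c k e'.1 e'.2.1 e'.2.2 + ∑ i', f e'.1 e'.2.1 i' * p (k + 1) θbar i')
          (xv, u k θbar, θv)) (x k θbar) (Pi.single i 1)) from funext fun θv => by
        rw [show (fun xv => Ham k xv (u k θbar) (p (k + 1) θbar) θv)
          = (fun xv => (fun e' : (Fin n → ℝ) × (Fin m → ℝ) × (Fin N → ℝ) =>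
            c k e'.1 e'.2.1 e'.2.2 + ∑ i', f e'.1 e'.2.1 i' * p (k + 1) θbar i')
          (xv, u k θbar, θv)) from funext fun xv => by rw [hHam]]]
    exact Hblock_13 (hGk k) _ _ _ _ _
  have hHueE : ∀ (k : ℕ) (j : Fin m) (a : Fin N), Hue k j a
      = fderiv ℝ (fun e => fderiv ℝ
          (fun e' : (Fin n → ℝ) × (Fin m → ℝ) × (Fin N → ℝ) =>
            c k e'.1 e'.2.1 e'.2.2 + ∑ i', f e'.1 e'.2.1 i' * p (k + 1) θbar i')
          e (0, Pi.single j 1, 0)) (x k θbar, u k θbar, θbar) (0, 0, Pi.single a 1) := by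
    intro k j a
    rw [hHue]
    simp only [Matrix.of_apply]
    rw [show (fun θv => fderiv ℝ
          (fun uv => Ham k (x k θbar) uv (p (k + 1) θbar) θv) (u k θbar) (Pi.single j 1))
        = (fun θv => fderiv ℝ (fun uv => (fun e' : (Fin n → ℝ) × (Fin m → ℝ) × (Fin N → ℝ) =>
            c k e'.1 e'.2.1 e'.2.2 + ∑ i', f e'.1 e'.2.1 i' * p (k + 1) θbar i')
          (x k θbar, uv, θv)) (u k θbar) (Pi.single j 1)) from funext fun θv => by
        rw [show (fun uv => Ham k (x k θbar) uv (p (k + 1) θbar) θv)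
          = (fun uv => (fun e' : (Fin n → ℝ) × (Fin m → ℝ) × (Fin N → ℝ) =>
            c k e'.1 e'.2.1 e'.2.2 + ∑ i', f e'.1 e'.2.1 i' * p (k + 1) θbar i')
          (x k θbar, uv, θv)) from funext fun uv => by rw [hHam]]]
    exact Hblock_23 (hGk k) _ _ _ _ _
  -- B entries in product-space form
  have hBE : ∀ (k : ℕ) (i' : Fin n) (j : Fin m),
      fderiv ℝ (fun q : (Fin n → ℝ) × (Fin m → ℝ) × (Fin N → ℝ) => f q.1 q.2.1 i')
        (x k θbar, u k θbar, θbar) (0, Pi.single j 1, 0) = B k i' j := by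
    intro k i' j
    rw [hB]
    simp only [Matrix.of_apply]
    exact (fderiv_partial2 ((hF3 i').differentiable two_ne_zero) _ _ _ _).symm
  have hAE : ∀ (k : ℕ) (i' i : Fin n),
      fderiv ℝ (fun q : (Fin n → ℝ) × (Fin m → ℝ) × (Fin N → ℝ) => f q.1 q.2.1 i')
        (x k θbar, u k θbar, θbar) (Pi.single i 1, 0, 0) = A k i' i := by
    intro k i' i
    rw [hA]
    simp only [Matrix.of_apply]
    exact (fderiv_partial1 ((hF3 i').differentiable two_ne_zero) _ _ _ _).symm
  -- F2 : differentiated stationarity condition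
  have hF2 : ∀ k, k < T →
      Hux k * Dx k + Huu k * Du k + Hue k + (B k)ᵀ * Dp (k + 1) = 0 := by
    intro k hk
    ext j a
    simp only [Matrix.add_apply, Matrix.mul_apply, Matrix.zero_apply,
      Matrix.transpose_apply]
    have key := pontryagin_diff
      (fun q : (Fin n → ℝ) × (Fin m → ℝ) × (Fin N → ℝ) => c k q.1 q.2.1 q.2.2)
      (fun i' q => f q.1 q.2.1 i') (hc k) hF3
      (hxdiff k hk.le) (hudiff k hk) (hpdiff (k + 1) (by omega) (by omega))
      ((0 : Fin n → ℝ), Pi.single j 1, (0 : Fin N → ℝ)) (Pi.single a 1)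
    beta_reduce at key
    have hzero : fderiv ℝ (fun t =>
        fderiv ℝ (fun q : (Fin n → ℝ) × (Fin m → ℝ) × (Fin N → ℝ) => c k q.1 q.2.1 q.2.2)
          (x k t, u k t, t) ((0 : Fin n → ℝ), Pi.single j 1, (0 : Fin N → ℝ)) +
        ∑ i', p (k + 1) t i' *
          fderiv ℝ (fun q : (Fin n → ℝ) × (Fin m → ℝ) × (Fin N → ℝ) => f q.1 q.2.1 i')
          (x k t, u k t, t) ((0 : Fin n → ℝ), Pi.single j 1, (0 : Fin N → ℝ)))
        θbar (Pi.single a 1) = 0 := by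
      have hev : (fun t =>
          fderiv ℝ (fun q : (Fin n → ℝ) × (Fin m → ℝ) × (Fin N → ℝ) => c k q.1 q.2.1 q.2.2)
            (x k t, u k t, t) ((0 : Fin n → ℝ), Pi.single j 1, (0 : Fin N → ℝ)) +
          ∑ i', p (k + 1) t i' *
            fderiv ℝ (fun q : (Fin n → ℝ) × (Fin m → ℝ) × (Fin N → ℝ) => f q.1 q.2.1 i')
            (x k t, u k t, t) ((0 : Fin n → ℝ), Pi.single j 1, (0 : Fin N → ℝ)))
          =ᶠ[nhds θbar] (fun _ => (0 : ℝ)) := by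
        filter_upwards [hEstat k hk j] with θ hθ
        have e1 : fderiv ℝ
            (fun q : (Fin n → ℝ) × (Fin m → ℝ) × (Fin N → ℝ) => c k q.1 q.2.1 q.2.2)
            (x k θ, u k θ, θ) ((0 : Fin n → ℝ), Pi.single j 1, (0 : Fin N → ℝ))
            = fderiv ℝ (fun uv => c k (x k θ) uv θ) (u k θ) (Pi.single j 1) :=
          (fderiv_partial2
            (G := fun q : (Fin n → ℝ) × (Fin m → ℝ) × (Fin N → ℝ) => c k q.1 q.2.1 q.2.2)
            ((hc k).differentiable two_ne_zero) (x k θ) (u k θ) θ (Pi.single j 1)).symm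
        have e2 : ∀ i' : Fin n, fderiv ℝ
            (fun q : (Fin n → ℝ) × (Fin m → ℝ) × (Fin N → ℝ) => f q.1 q.2.1 i')
            (x k θ, u k θ, θ) ((0 : Fin n → ℝ), Pi.single j 1, (0 : Fin N → ℝ))
            = fderiv ℝ (fun uv => f (x k θ) uv i') (u k θ) (Pi.single j 1) := fun i' =>
          (fderiv_partial2 ((hF3 i').differentiable two_ne_zero) (x k θ) (u k θ) θ
            (Pi.single j 1)).symm
        rw [e1]
        simp only [e2]
        exact hθ
      rw [Filter.EventuallyEq.fderiv_eq hev]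
      simp
    rw [hzero] at key
    simp only [hHuxE k j, hHuuE k j, hHueE k j, hBE k, hDxdef, hDudef, hDpdef,
      Matrix.of_apply] at key ⊢
    simp only [mul_comm] at key ⊢
    linarith [key]

  -- F3 : differentiated costate recursion
  have hF3' : ∀ k, 1 ≤ k → k < T →
      Dp k = Hxx k * Dx k + (Hux k)ᵀ * Du k + Hxe k + (A k)ᵀ * Dp (k + 1) := by
    intro k h1 hk
    ext i a
    simp only [Matrix.add_apply, Matrix.mul_apply, Matrix.transpose_apply]
    have key := pontryagin_diff
      (fun q : (Fin n → ℝ) × (Fin m → ℝ) × (Fin N → ℝ) => c k q.1 q.2.1 q.2.2)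
      (fun i' q => f q.1 q.2.1 i') (hc k) hF3
      (hxdiff k hk.le) (hudiff k hk) (hpdiff (k + 1) (by omega) (by omega))
      ((Pi.single i 1 : Fin n → ℝ), (0 : Fin m → ℝ), (0 : Fin N → ℝ)) (Pi.single a 1)
    beta_reduce at key
    have hL : Dp k i a = fderiv ℝ (fun t =>
        fderiv ℝ (fun q : (Fin n → ℝ) × (Fin m → ℝ) × (Fin N → ℝ) => c k q.1 q.2.1 q.2.2)
          (x k t, u k t, t) ((Pi.single i 1 : Fin n → ℝ), (0 : Fin m → ℝ), (0 : Fin N → ℝ)) +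
        ∑ i', p (k + 1) t i' *
          fderiv ℝ (fun q : (Fin n → ℝ) × (Fin m → ℝ) × (Fin N → ℝ) => f q.1 q.2.1 i')
          (x k t, u k t, t) ((Pi.single i 1 : Fin n → ℝ), (0 : Fin m → ℝ), (0 : Fin N → ℝ)))
        θbar (Pi.single a 1) := by
      rw [hDpdef]
      simp only [Matrix.of_apply]
      have hev : (fun θ => p k θ i) =ᶠ[nhds θbar] (fun θ =>
          fderiv ℝ (fun q : (Fin n → ℝ) × (Fin m → ℝ) × (Fin N → ℝ) => c k q.1 q.2.1 q.2.2)
            (x k θ, u k θ, θ)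
            ((Pi.single i 1 : Fin n → ℝ), (0 : Fin m → ℝ), (0 : Fin N → ℝ)) +
          ∑ i', p (k + 1) θ i' *
            fderiv ℝ (fun q : (Fin n → ℝ) × (Fin m → ℝ) × (Fin N → ℝ) => f q.1 q.2.1 i')
            (x k θ, u k θ, θ)
            ((Pi.single i 1 : Fin n → ℝ), (0 : Fin m → ℝ), (0 : Fin N → ℝ))) := by
        filter_upwards [hEcos k h1 hk i] with θ hθ
        have e1 : fderiv ℝ
            (fun q : (Fin n → ℝ) × (Fin m → ℝ) × (Fin N → ℝ) => c k q.1 q.2.1 q.2.2)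
            (x k θ, u k θ, θ)
            ((Pi.single i 1 : Fin n → ℝ), (0 : Fin m → ℝ), (0 : Fin N → ℝ))
            = fderiv ℝ (fun xv => c k xv (u k θ) θ) (x k θ) (Pi.single i 1) :=
          (fderiv_partial1
            (G := fun q : (Fin n → ℝ) × (Fin m → ℝ) × (Fin N → ℝ) => c k q.1 q.2.1 q.2.2)
            ((hc k).differentiable two_ne_zero) (x k θ) (u k θ) θ (Pi.single i 1)).symm
        have e2 : ∀ i' : Fin n, fderiv ℝ
            (fun q : (Fin n → ℝ) × (Fin m → ℝ) × (Fin N → ℝ) => f q.1 q.2.1 i')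
            (x k θ, u k θ, θ)
            ((Pi.single i 1 : Fin n → ℝ), (0 : Fin m → ℝ), (0 : Fin N → ℝ))
            = fderiv ℝ (fun xv => f xv (u k θ) i') (x k θ) (Pi.single i 1) := fun i' =>
          (fderiv_partial1 ((hF3 i').differentiable two_ne_zero) (x k θ) (u k θ) θ
            (Pi.single i 1)).symm
        rw [e1]
        simp only [e2]
        exact hθ
      rw [Filter.EventuallyEq.fderiv_eq hev]
    rw [hL]
    -- swap the mixed second derivative using Clairaut
    have hswap : ∀ j : Fin m,
        fderiv ℝ (fun e => fderiv ℝ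
          (fun e' : (Fin n → ℝ) × (Fin m → ℝ) × (Fin N → ℝ) =>
            c k e'.1 e'.2.1 e'.2.2 + ∑ i', f e'.1 e'.2.1 i' * p (k + 1) θbar i')
          e ((Pi.single i 1 : Fin n → ℝ), (0 : Fin m → ℝ), (0 : Fin N → ℝ)))
          (x k θbar, u k θbar, θbar) (0, Pi.single j 1, 0)
        = fderiv ℝ (fun e => fderiv ℝ
          (fun e' : (Fin n → ℝ) × (Fin m → ℝ) × (Fin N → ℝ) =>
            c k e'.1 e'.2.1 e'.2.2 + ∑ i', f e'.1 e'.2.1 i' * p (k + 1) θbar i')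
          e (0, Pi.single j 1, 0))
          (x k θbar, u k θbar, θbar)
          ((Pi.single i 1 : Fin n → ℝ), (0 : Fin m → ℝ), (0 : Fin N → ℝ)) := fun j =>
      sderiv_symm (hGk k) _ _ _
    simp only [hswap] at key
    simp only [hHxxE k i, hHuxE k, hHxeE k i, hAE k, hDxdef, hDudef, hDpdef,
      Matrix.of_apply] at key ⊢
    simp only [mul_comm] at key ⊢
    linarith [key]
  -- F4 : differentiated terminal condition
  have hF4 : Dp T = HTxx * Dx T + HTxe := by
    ext i a
    simp only [Matrix.add_apply, Matrix.mul_apply]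
    have key := curve_expand2 (G := fun q : (Fin n → ℝ) × (Fin N → ℝ) => cT q.1 q.2)
      hcT (hxdiff T le_rfl) ((Pi.single i 1 : Fin n → ℝ), (0 : Fin N → ℝ)) (Pi.single a 1)
    have hL : Dp T i a = fderiv ℝ (fun t =>
        fderiv ℝ (fun q : (Fin n → ℝ) × (Fin N → ℝ) => cT q.1 q.2) (x T t, t)
          ((Pi.single i 1 : Fin n → ℝ), (0 : Fin N → ℝ))) θbar (Pi.single a 1) := by
      rw [hDpdef]
      simp only [Matrix.of_apply]
      have hev : (fun θ => p T θ i) =ᶠ[nhds θbar] (fun θ =>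
          fderiv ℝ (fun q : (Fin n → ℝ) × (Fin N → ℝ) => cT q.1 q.2) (x T θ, θ)
            ((Pi.single i 1 : Fin n → ℝ), (0 : Fin N → ℝ))) := by
        filter_upwards [hEterm i] with θ hθ
        rw [hθ]
        exact fderiv2_partial1 (G := fun q : (Fin n → ℝ) × (Fin N → ℝ) => cT q.1 q.2)
          (hcT.differentiable two_ne_zero) (x T θ) θ (Pi.single i 1)
      rw [Filter.EventuallyEq.fderiv_eq hev]
    rw [hL, key]
    have hTxx : ∀ i'' : Fin n, HTxx i i''
        = fderiv ℝ (fun e => fderiv ℝ (fun q : (Fin n → ℝ) × (Fin N → ℝ) => cT q.1 q.2)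
            e ((Pi.single i 1 : Fin n → ℝ), (0 : Fin N → ℝ))) (x T θbar, θbar)
            (Pi.single i'' 1, 0) := by
      intro i''
      rw [hHTxx]
      simp only [Matrix.of_apply]
      exact Hblock2_11 hcT _ _ _ _
    have hTxe : HTxe i a
        = fderiv ℝ (fun e => fderiv ℝ (fun q : (Fin n → ℝ) × (Fin N → ℝ) => cT q.1 q.2)
            e ((Pi.single i 1 : Fin n → ℝ), (0 : Fin N → ℝ))) (x T θbar, θbar)
            (0, Pi.single a 1) := by
      rw [hHTxe]
      simp only [Matrix.of_apply]
      exact Hblock2_12 hcT _ _ _ _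
    simp only [hTxx, hTxe, hDxdef, Matrix.of_apply]
    simp only [mul_comm]

  -- symmetry of Huu
  have hHuuSym : ∀ k : ℕ, (Huu k)ᵀ = Huu k := by
    intro k
    ext j j'
    rw [Matrix.transpose_apply, hHuuE k j', hHuuE k j]
    exact sderiv_symm (hGk k) _ _ _
  have hHuuDet : ∀ k, k < T → IsUnit (Huu k).det :=
    fun k hk => (Matrix.isUnit_iff_isUnit_det _).mp (hHuuInv k hk)
  have hIPRDet : ∀ k, k < T → IsUnit (1 + cP (k + 1) * cR k).det :=
    fun k hk => (Matrix.isUnit_iff_isUnit_det _).mp (hIPR k hk)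
  -- one backward step of the Riccati argument
  have hstep : ∀ k, k < T →
      Dp (k + 1) = cP (k + 1) * Dx (k + 1) + cW (k + 1) →
      Dp (k + 1) = (1 + cP (k + 1) * cR k)⁻¹ *
          (cP (k + 1) * cA k * Dx k + cP (k + 1) * cM k + cW (k + 1)) ∧
        Du k = -((Huu k)⁻¹ * (Hux k * Dx k + Hue k + (B k)ᵀ *
          ((1 + cP (k + 1) * cR k)⁻¹ *
            (cP (k + 1) * cA k * Dx k + cP (k + 1) * cM k + cW (k + 1))))) := by
    intro k hk hnext
    have h1 : Huu k * Du k = -(Hux k * Dx k + Hue k + (B k)ᵀ * Dp (k + 1)) := by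
      have h := hF2 k hk
      have h' : Huu k * Du k + (Hux k * Dx k + Hue k + (B k)ᵀ * Dp (k + 1)) = 0 := by
        rw [← h]; abel
      exact eq_neg_of_add_eq_zero_left h'
    have hDu : Du k = -((Huu k)⁻¹ * (Hux k * Dx k + Hue k + (B k)ᵀ * Dp (k + 1))) := by
      calc Du k = (Huu k)⁻¹ * (Huu k * Du k) := by
            rw [← Matrix.mul_assoc, Matrix.nonsing_inv_mul _ (hHuuDet k hk), Matrix.one_mul]
        _ = -((Huu k)⁻¹ * (Hux k * Dx k + Hue k + (B k)ᵀ * Dp (k + 1))) := by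
            rw [h1, Matrix.mul_neg]
    have hXnext : Dx (k + 1) = cA k * Dx k + cM k - cR k * Dp (k + 1) := by
      rw [hF1 k hk, hDu, hcA, hcR, hcM]
      simp only [Matrix.mul_neg, Matrix.mul_add, Matrix.sub_mul, ← Matrix.mul_assoc]
      abel
    have h4 : (1 + cP (k + 1) * cR k) * Dp (k + 1)
        = cP (k + 1) * cA k * Dx k + cP (k + 1) * cM k + cW (k + 1) := by
      have h3 : Dp (k + 1)
          = cP (k + 1) * (cA k * Dx k + cM k - cR k * Dp (k + 1)) + cW (k + 1) := by
        rw [← hXnext]; exact hnext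
      rw [Matrix.add_mul, Matrix.one_mul]
      calc Dp (k + 1) + cP (k + 1) * cR k * Dp (k + 1)
          = (cP (k + 1) * (cA k * Dx k + cM k - cR k * Dp (k + 1)) + cW (k + 1))
            + cP (k + 1) * cR k * Dp (k + 1) := by rw [← h3]
        _ = cP (k + 1) * cA k * Dx k + cP (k + 1) * cM k + cW (k + 1) := by
            simp only [Matrix.mul_sub, Matrix.mul_add, ← Matrix.mul_assoc]
            abel
    have hq : Dp (k + 1) = (1 + cP (k + 1) * cR k)⁻¹ *
        (cP (k + 1) * cA k * Dx k + cP (k + 1) * cM k + cW (k + 1)) := by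
      calc Dp (k + 1)
          = (1 + cP (k + 1) * cR k)⁻¹ * ((1 + cP (k + 1) * cR k) * Dp (k + 1)) := by
            rw [← Matrix.mul_assoc, Matrix.nonsing_inv_mul _ (hIPRDet k hk), Matrix.one_mul]
        _ = _ := by rw [h4]
    exact ⟨hq, by rw [hDu, hq]⟩
  -- transpose of cA
  have hcAT : ∀ k, k < T → (cA k)ᵀ = (A k)ᵀ - (Hux k)ᵀ * (Huu k)⁻¹ * (B k)ᵀ := by
    intro k hk
    rw [hcA, Matrix.transpose_sub, Matrix.transpose_mul, Matrix.transpose_mul,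
      Matrix.transpose_nonsing_inv, hHuuSym k, ← Matrix.mul_assoc]
  -- backward induction : Dp k = cP k * Dx k + cW k
  have hBack : ∀ d k, k + d = T → 1 ≤ k → Dp k = cP k * Dx k + cW k := by
    intro d
    induction d with
    | zero =>
      intro k hkd _
      have : k = T := by omega
      subst this
      rw [hF4, hcPT, hcWT]
    | succ d ih =>
      intro k hkd h1
      have hkT : k < T := by omega
      have hnext : Dp (k + 1) = cP (k + 1) * Dx (k + 1) + cW (k + 1) :=
        ih (k + 1) (by omega) (by omega)
      obtain ⟨hq, hDu⟩ := hstep k hkT hnext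
      rw [hF3' k h1 hkT, hq, hDu, hcP k hkT, hcW k hkT, hcAT k hkT, hcQ, hcN]
      simp only [Matrix.mul_neg, Matrix.neg_mul, Matrix.mul_add, Matrix.add_mul,
        Matrix.sub_mul, Matrix.mul_sub, ← Matrix.mul_assoc]
      abel
  -- forward phase
  have hkey : ∀ k, k < T → X k = Dx k → U k = Du k ∧ X (k + 1) = Dx (k + 1) := by
    intro k hk hXk
    have hnext : Dp (k + 1) = cP (k + 1) * Dx (k + 1) + cW (k + 1) :=
      hBack (T - (k + 1)) (k + 1) (by omega) (by omega)
    obtain ⟨hq, hDu⟩ := hstep k hk hnext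
    have hUk : U k = Du k := by
      rw [hU k hk, hXk, hDu, Matrix.mul_assoc ((B k)ᵀ) _ _]
    exact ⟨hUk, by rw [hX k hk, hUk, hXk, hF1 k hk]⟩
  have hXall : ∀ k, k ≤ T → X k = Dx k := by
    intro k
    induction k with
    | zero => intro _; rw [hX0, hDx0]
    | succ k ih => intro hk; exact (hkey k (by omega) (ih (by omega))).2
  refine ⟨fun k hk => ?_, fun k hk => ?_⟩
  · rw [hXall k hk, hDxdef]
  · rw [(hkey k hk (hXall k hk.le)).1, hDudef]
end

section
/- Riccati contraction inequality for the EKF with constant parameter dynamics: let P, Q ∈ ℝ^{N×N} and R ∈ ℝ^{q×q} be symmetric matrices, G ∈ ℝ^{q×N}, and suppose there exist positive reals p̄, ḡ, r̲, q̲ such that 0 ≺ P ⪯ p̄·I, ‖G‖ ≤ ḡ (operator 2-norm), R ⪰ r̲·I, and Q ⪰ q̲·I. Let K = P Gᵀ (G P Gᵀ + R)^{-1} and define the next predicted covariance P⁺ = (I − K G) P + Q. Then P⁺ is symmetric positive definite, and there exists a real λ ∈ (0, 1), depending only on p̄, ḡ, r̲, q̲, such that (I − K G)ᵀ (P⁺)^{-1}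 (I − K G) ⪯ (1 − λ) P^{-1}. -/
open Matrix
open scoped Matrix.Norms.L2Operator
open scoped MatrixOrder

namespace EKFAux

variable {n : Type*} [Fintype n] [DecidableEq n]

lemma herm_t {X : Matrix n n ℝ} (h : X.IsHermitian) : Xᵀ = X := by
  rw [← Matrix.conjTranspose_eq_transpose_of_trivial]; exact h

lemma pdet {A : Matrix n n ℝ} (hA : A.PosDef) : IsUnit A.det :=
  hA.det_pos.ne'.isUnit

lemma smul_psd {A : Matrix n n ℝ} (hA : A.PosSemidef) {c : ℝ} (hc : 0 ≤ c) :
    (c • A).PosSemidef := by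
  refine Matrix.posSemidef_iff_dotProduct_mulVec.mpr ⟨?_, fun x => ?_⟩
  · unfold Matrix.IsHermitian
    rw [Matrix.conjTranspose_smul, star_trivial, hA.1.eq]
  · rw [smul_mulVec, dotProduct_smul]
    exact mul_nonneg hc (hA.dotProduct_mulVec_nonneg x)

lemma smul_pd {A : Matrix n n ℝ} (hA : A.PosDef) {c : ℝ} (hc : 0 < c) :
    (c • A).PosDef := by
  refine Matrix.posDef_iff_dotProduct_mulVec.mpr ⟨?_, fun x hx => ?_⟩
  · unfold Matrix.IsHermitian
    rw [Matrix.conjTranspose_smul, star_trivial, hA.1.eq]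
  · rw [smul_mulVec, dotProduct_smul]
    exact mul_pos hc (hA.dotProduct_mulVec_pos hx)

lemma tcongr_psd {A : Matrix n n ℝ} (hA : A.PosSemidef)
    {m : Type*} [Fintype m] (B : Matrix n m ℝ) : (Bᵀ * A * B).PosSemidef := by
  have := hA.conjTranspose_mul_mul_same B
  rwa [Matrix.conjTranspose_eq_transpose_of_trivial] at this

lemma tcongr_pd {A C : Matrix n n ℝ} (hA : A.PosDef) (hC : IsUnit C) :
    (Cᵀ * A * C).PosDef := by
  rw [← Matrix.conjTranspose_eq_transpose_of_trivial]
  refine Matrix.posDef_iff_dotProduct_mulVec.mpr ⟨Matrix.isHermitian_conjTranspose_mul_mul C hA.1, fun x hx => ?_⟩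
  have hx' : C *ᵥ x ≠ 0 := by
    intro h
    apply hx
    have hinj := Matrix.mulVec_injective_iff_isUnit.mpr hC
    apply hinj
    simpa using h
  simpa only [star_mulVec, dotProduct_mulVec, vecMul_vecMul] using hA.dotProduct_mulVec_pos hx'

lemma sq_sub_smul {M : Matrix n n ℝ} (hM : M.PosSemidef) {c : ℝ}
    (h : (M - c • 1).PosSemidef) : (M * M - c • M).PosSemidef := by
  obtain ⟨S, hst, hss⟩ : ∃ S : Matrix n n ℝ, Sᵀ = S ∧ S * S = M :=
    ⟨CFC.sqrt M, herm_t (CFC.sqrt_nonneg M).posSemidef.1, CFC.sqrt_mul_sqrt_self M hM.nonneg⟩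
  have h2 : S * M * S = M * M := by rw [← hss]; noncomm_ring
  have key : Sᵀ * (M - c • 1) * S = M * M - c • M := by
    rw [hst, mul_sub, mul_smul_comm, mul_one, sub_mul, smul_mul_assoc, hss, h2]
  exact key ▸ tcongr_psd h S

lemma one_sub_inv {D : Matrix n n ℝ} (hD : D.PosDef) (h : (D - 1).PosSemidef) :
    (1 - D⁻¹).PosSemidef := by
  have hDdet : IsUnit D.det := pdet hD
  obtain ⟨E, hEt, hEE⟩ : ∃ E : Matrix n n ℝ, Eᵀ = E ∧ E * E = D⁻¹ :=
    ⟨CFC.sqrt D⁻¹, herm_t (CFC.sqrt_nonneg D⁻¹).posSemidef.1,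
      CFC.sqrt_mul_sqrt_self D⁻¹ hD.inv.posSemidef.nonneg⟩
  have h1 : E * D⁻¹ = D⁻¹ * E := by rw [← hEE, ← mul_assoc]
  have hc1 : D * (D⁻¹ * E) * D = E * D := by
    rw [← mul_assoc, Matrix.mul_nonsing_inv _ hDdet, one_mul]
  have hc2 : D * (E * D⁻¹) * D = D * E := by
    rw [mul_assoc, mul_assoc, Matrix.nonsing_inv_mul _ hDdet, mul_one]
  have hComm : E * D = D * E := by rw [← hc1, ← h1, hc2]
  have hEDE : E * D * E = 1 := by
    rw [hComm, mul_assoc, hEE, Matrix.mul_nonsing_inv _ hDdet]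
  have key : Eᵀ * (D - 1) * E = 1 - D⁻¹ := by
    rw [hEt, mul_sub, mul_one, sub_mul, hEDE, hEE]
  exact key ▸ tcongr_psd h E

lemma inv_antitone {A B : Matrix n n ℝ} (hA : A.PosDef) (hB : B.PosDef)
    (h : (B - A).PosSemidef) : (A⁻¹ - B⁻¹).PosSemidef := by
  have hAdet : IsUnit A.det := pdet hA
  have hBdet : IsUnit B.det := pdet hB
  obtain ⟨C, hCt, hCC⟩ : ∃ C : Matrix n n ℝ, Cᵀ = C ∧ C * C = A⁻¹ :=
    ⟨CFC.sqrt A⁻¹, herm_t (CFC.sqrt_nonneg A⁻¹).posSemidef.1,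
      CFC.sqrt_mul_sqrt_self A⁻¹ hA.inv.posSemidef.nonneg⟩
  have hCdet : IsUnit C.det := by
    have h2 : IsUnit (C.det * C.det) := by
      rw [← Matrix.det_mul, hCC]
      exact pdet hA.inv
    exact isUnit_of_mul_isUnit_left h2
  have hCu : IsUnit C := (Matrix.isUnit_iff_isUnit_det C).mpr hCdet
  have hCCinv : C * C⁻¹ = 1 := Matrix.mul_nonsing_inv _ hCdet
  have hCinvC : C⁻¹ * C = 1 := Matrix.nonsing_inv_mul _ hCdet
  have tc : ∀ X : Matrix n n ℝ, X.PosSemidef → (C * X * C).PosSemidef := by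
    intro X hX
    have := tcongr_psd hX C
    rwa [hCt] at this
  have hAeq : A = C⁻¹ * C⁻¹ := by
    rw [← Matrix.mul_inv_rev, hCC, Matrix.nonsing_inv_nonsing_inv _ hAdet]
  have hCAC : C * A * C = 1 := by
    rw [hAeq, ← mul_assoc, mul_assoc (C * C⁻¹), hCCinv, one_mul, hCinvC]
  have hDpd : (C * B * C).PosDef := by
    have := tcongr_pd hB hCu
    rwa [hCt] at this
  have hD1 : ((C * B * C) - 1).PosSemidef := by
    have key : C * (B - A) * C = (C * B * C) - 1 := by
      rw [mul_sub, sub_mul, hCAC]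
    exact key ▸ tc _ h
  have hmain := one_sub_inv hDpd hD1
  have hDinv : (C * B * C)⁻¹ = C⁻¹ * B⁻¹ * C⁻¹ := by
    rw [Matrix.mul_inv_rev, Matrix.mul_inv_rev, mul_assoc]
  have key : C * (1 - (C * B * C)⁻¹) * C = A⁻¹ - B⁻¹ := by
    rw [hDinv, mul_sub, mul_one, sub_mul, hCC]
    congr 1
    have h3 : C * (C⁻¹ * B⁻¹ * C⁻¹) * C = (C * C⁻¹) * B⁻¹ * (C⁻¹ * C) := by noncomm_ring
    rw [h3, hCCinv, hCinvC, one_mul, mul_one]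
  exact key ▸ tc _ hmain

end EKFAux

/-- **Riccati contraction inequality for the EKF with constant parameter dynamics.**
Let `P, Q ∈ ℝ^{N×N}` and `R ∈ ℝ^{q×q}` be symmetric matrices, `G ∈ ℝ^{q×N}`, and suppose
there exist positive reals `p̄, ḡ, r̲, q̲` with `0 ≺ P ⪯ p̄·I`, `‖G‖ ≤ ḡ`, `R ⪰ r̲·I` and
`Q ⪰ q̲·I`.  Let `K = P Gᵀ (G P Gᵀ + R)⁻¹` and `P⁺ = (I − K G) P + Q`.  Then `P⁺` is
symmetric positive definite and there exists `λ ∈ (0,1)`, depending only on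
`p̄, ḡ, r̲, q̲`, such that `(I − K G)ᵀ (P⁺)⁻¹ (I − K G) ⪯ (1 − λ) P⁻¹`. -/
theorem ekf_riccati_contraction
    {N q : ℕ}
    (pbar gbar rlow qlow : ℝ)
    (hpbar : 0 < pbar) (hgbar : 0 < gbar) (hrlow : 0 < rlow) (hqlow : 0 < qlow) :
    ∃ lam : ℝ, 0 < lam ∧ lam < 1 ∧
      ∀ (P Q : Matrix (Fin N) (Fin N) ℝ) (R : Matrix (Fin q) (Fin q) ℝ)
        (G : Matrix (Fin q) (Fin N) ℝ),
        P.IsSymm → Q.IsSymm → R.IsSymm →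
        P.PosDef →
        (pbar • (1 : Matrix (Fin N) (Fin N) ℝ) - P).PosSemidef →
        ‖G‖ ≤ gbar →
        (R - rlow • (1 : Matrix (Fin q) (Fin q) ℝ)).PosSemidef →
        (Q - qlow • (1 : Matrix (Fin N) (Fin N) ℝ)).PosSemidef →
        ∀ (K : Matrix (Fin N) (Fin q) ℝ) (Pplus : Matrix (Fin N) (Fin N) ℝ),
          K = P * Gᵀ * (G * P * Gᵀ + R)⁻¹ →
          Pplus = (1 - K * G) * P + Q →
          Pplus.PosDef ∧
            ((1 - lam) • P⁻¹ - (1 - K * G)ᵀ * Pplus⁻¹ * (1 - K * G)).PosSemidef := by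
  classical
  refine ⟨qlow / (pbar + qlow), div_pos hqlow (by positivity),
    (div_lt_one (by positivity)).mpr (lt_add_of_pos_left _ hpbar), ?_⟩
  intro P Q R G hPs hQs hRs hP hPub hG hRlb hQlb K Pplus hK hPp
  set lam : ℝ := qlow / (pbar + qlow) with hlamdef
  -- basic positive definiteness facts
  have hone_pd : (1 : Matrix (Fin N) (Fin N) ℝ).PosDef := Matrix.PosDef.one
  have hone_pd' : (1 : Matrix (Fin q) (Fin q) ℝ).PosDef := Matrix.PosDef.one
  have hRpd : R.PosDef := by
    have h1 : R = (R - rlow • (1 : Matrix (Fin q) (Fin q) ℝ)) + rlow • 1 := by abel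
    rw [h1]
    exact Matrix.PosDef.posSemidef_add hRlb (EKFAux.smul_pd hone_pd' hrlow)
  have hQpd : Q.PosDef := by
    have h1 : Q = (Q - qlow • (1 : Matrix (Fin N) (Fin N) ℝ)) + qlow • 1 := by abel
    rw [h1]
    exact Matrix.PosDef.posSemidef_add hQlb (EKFAux.smul_pd hone_pd hqlow)
  have hPdet : IsUnit P.det := EKFAux.pdet hP
  have hRdet : IsUnit R.det := EKFAux.pdet hRpd
  have hGt : Gᵀ = Gᴴ := (Matrix.conjTranspose_eq_transpose_of_trivial G).symm
  have hSpd : (G * P * Gᵀ + R).PosDef := by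
    have h1 : (G * P * Gᵀ).PosSemidef := by
      rw [hGt]
      exact hP.posSemidef.mul_mul_conjTranspose_same G
    exact Matrix.PosDef.posSemidef_add h1 hRpd
  set S : Matrix (Fin q) (Fin q) ℝ := G * P * Gᵀ + R with hSdef
  have hSdet : IsUnit S.det := EKFAux.pdet hSpd
  have hGPG : G * P * Gᵀ = S - R := by rw [hSdef]; abel
  have h0 : R⁻¹ * (G * P * Gᵀ) * S⁻¹ = R⁻¹ - S⁻¹ := by
    rw [hGPG, mul_sub, sub_mul, mul_assoc R⁻¹ S S⁻¹, Matrix.mul_nonsing_inv _ hSdet,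
      mul_one, Matrix.nonsing_inv_mul _ hRdet, one_mul]
  have hZ : (1 + P * Gᵀ * R⁻¹ * G) * (1 - P * Gᵀ * S⁻¹ * G) = 1 := by
    have expand : (1 + P * Gᵀ * R⁻¹ * G) * (1 - P * Gᵀ * S⁻¹ * G)
        = 1 + P * Gᵀ * (R⁻¹ - S⁻¹ - R⁻¹ * (G * P * Gᵀ) * S⁻¹) * G := by
      simp only [Matrix.mul_add, Matrix.add_mul, Matrix.mul_sub, Matrix.sub_mul, Matrix.mul_one, Matrix.one_mul, Matrix.mul_assoc]
      try abel
    rw [expand, h0]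
    simp
  set M : Matrix (Fin N) (Fin N) ℝ := P⁻¹ + Gᵀ * R⁻¹ * G with hMdef
  have hGRG : (Gᵀ * R⁻¹ * G).PosSemidef := by
    rw [hGt]
    exact hRpd.inv.posSemidef.conjTranspose_mul_mul_same G
  have hMpd : M.PosDef := hP.inv.add_posSemidef hGRG
  have hMdet : IsUnit M.det := EKFAux.pdet hMpd
  have hMt : Mᵀ = M := EKFAux.herm_t hMpd.isHermitian
  have hMMinv : M * M⁻¹ = 1 := Matrix.mul_nonsing_inv _ hMdet
  have hM2 : M = P⁻¹ * (1 + P * Gᵀ * R⁻¹ * G) := by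
    have h1 : P⁻¹ * (1 + P * Gᵀ * R⁻¹ * G) = P⁻¹ + (P⁻¹ * P) * (Gᵀ * R⁻¹ * G) := by
      simp only [Matrix.mul_add, Matrix.mul_one, Matrix.mul_assoc]
      try abel
    rw [h1, Matrix.nonsing_inv_mul _ hPdet, one_mul]
  have hAP : M⁻¹ = (1 - K * G) * P := by
    apply Matrix.inv_eq_right_inv
    rw [hK, hM2]
    have hassoc : P⁻¹ * (1 + P * Gᵀ * R⁻¹ * G) * ((1 - P * Gᵀ * S⁻¹ * G) * P)
        = P⁻¹ * (((1 + P * Gᵀ * R⁻¹ * G) * (1 - P * Gᵀ * S⁻¹ * G)) * P) := by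
      simp only [Matrix.mul_add, Matrix.add_mul, Matrix.mul_sub, Matrix.sub_mul, Matrix.mul_one, Matrix.one_mul, Matrix.mul_assoc]
      try abel
    rw [hassoc, hZ, one_mul, Matrix.nonsing_inv_mul _ hPdet]
  have hPplus : Pplus = M⁻¹ + Q := by rw [hPp, ← hAP]
  have hPpluspd : Pplus.PosDef := by
    rw [hPplus]
    exact hMpd.inv.add_posSemidef hQpd.posSemidef
  refine ⟨hPpluspd, ?_⟩
  -- the matrix N = M + M*Q*M
  have hNpd : (M + M * Q * M).PosDef := by
    have h1 : (M * Q * M).PosSemidef := by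
      have := EKFAux.tcongr_psd hQpd.posSemidef M
      rwa [hMt] at this
    exact hMpd.add_posSemidef h1
  have hNinv : (M + M * Q * M)⁻¹ = M⁻¹ * (M⁻¹ + Q)⁻¹ * M⁻¹ := by
    have h1 : M + M * Q * M = M * (M⁻¹ + Q) * M := by
      have h2 : M * (M⁻¹ + Q) * M = (M * M⁻¹) * M + M * Q * M := by
        simp only [Matrix.mul_add, Matrix.add_mul, Matrix.mul_assoc]
        try abel
      rw [h2, hMMinv, one_mul]
    rw [h1, Matrix.mul_inv_rev, Matrix.mul_inv_rev, ← mul_assoc]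
  -- scalar facts
  have hpne : pbar ≠ 0 := hpbar.ne'
  have hpqne : pbar + qlow ≠ 0 := by positivity
  have hc_pos : (0:ℝ) < 1 + qlow * pbar⁻¹ := by positivity
  have hlam1 : (1:ℝ) - lam = pbar / (pbar + qlow) := by
    rw [hlamdef]; field_simp; ring
  have hscal : (1 + qlow * pbar⁻¹) * (1 - lam) = 1 := by
    rw [hlam1]; field_simp; try ring
  -- Loewner chain
  have hStep1 : (M - P⁻¹).PosSemidef := by
    have h1 : M - P⁻¹ = Gᵀ * R⁻¹ * G := by rw [hMdef]; abel
    rw [h1]; exact hGRG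
  have hPinv_lb : (P⁻¹ - pbar⁻¹ • (1 : Matrix (Fin N) (Fin N) ℝ)).PosSemidef := by
    have h1 : (pbar • (1 : Matrix (Fin N) (Fin N) ℝ))⁻¹ = pbar⁻¹ • 1 := by
      apply Matrix.inv_eq_right_inv
      rw [smul_mul_assoc, mul_smul_comm, smul_smul, mul_inv_cancel₀ hpne, one_smul, mul_one]
    have h2 := EKFAux.inv_antitone hP (EKFAux.smul_pd hone_pd hpbar) hPub
    rwa [h1] at h2
  have hMlb : (M - pbar⁻¹ • (1 : Matrix (Fin N) (Fin N) ℝ)).PosSemidef := by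
    have h1 : M - pbar⁻¹ • (1 : Matrix (Fin N) (Fin N) ℝ)
        = (M - P⁻¹) + (P⁻¹ - pbar⁻¹ • 1) := by abel
    rw [h1]; exact hStep1.add hPinv_lb
  have hMsq : (M * M - pbar⁻¹ • M).PosSemidef := EKFAux.sq_sub_smul hMpd.posSemidef hMlb
  have hMQM : (M * Q * M - qlow • (M * M)).PosSemidef := by
    have h1 : Mᵀ * (Q - qlow • 1) * M = M * Q * M - qlow • (M * M) := by
      rw [hMt, mul_sub, mul_smul_comm, mul_one, sub_mul, smul_mul_assoc]
    exact h1 ▸ EKFAux.tcongr_psd hQlb M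
  have hNlb : ((M + M * Q * M) - (1 + qlow * pbar⁻¹) • P⁻¹).PosSemidef := by
    have hrw : (M + M * Q * M) - (1 + qlow * pbar⁻¹) • P⁻¹
        = (M * Q * M - qlow • (M * M)) + qlow • (M * M - pbar⁻¹ • M)
          + (1 + qlow * pbar⁻¹) • (M - P⁻¹) := by
      module
    rw [hrw]
    exact (hMQM.add (EKFAux.smul_psd hMsq hqlow.le)).add
      (EKFAux.smul_psd hStep1 hc_pos.le)
  have hMain := EKFAux.inv_antitone (EKFAux.smul_pd hP.inv hc_pos) hNpd hNlb
  have hscalinv : ((1 + qlow * pbar⁻¹) • P⁻¹)⁻¹ = (1 - lam) • P := by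
    apply Matrix.inv_eq_right_inv
    rw [smul_mul_assoc, mul_smul_comm, smul_smul, Matrix.nonsing_inv_mul _ hPdet,
      hscal, one_smul]
  rw [hscalinv] at hMain
  -- final congruence
  have hPt : Pᵀ = P := hPs
  have hPinvt : (P⁻¹)ᵀ = P⁻¹ := by rw [Matrix.transpose_nonsing_inv, hPt]
  have hA' : (1 : Matrix (Fin N) (Fin N) ℝ) - K * G = M⁻¹ * P⁻¹ := by
    calc (1 : Matrix (Fin N) (Fin N) ℝ) - K * G
        = ((1 - K * G) * P) * P⁻¹ := by
          rw [mul_assoc, Matrix.mul_nonsing_inv _ hPdet, mul_one]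
      _ = M⁻¹ * P⁻¹ := by rw [← hAP]
  have hAt : ((1 : Matrix (Fin N) (Fin N) ℝ) - K * G)ᵀ = P⁻¹ * M⁻¹ := by
    rw [hA', Matrix.transpose_mul, hPinvt, Matrix.transpose_nonsing_inv, hMt]
  have hfinal_eq : (1 - lam) • P⁻¹ - (1 - K * G)ᵀ * Pplus⁻¹ * (1 - K * G)
      = P⁻¹ * ((1 - lam) • P - (M + M * Q * M)⁻¹) * P⁻¹ := by
    rw [hAt, hA', hPplus, hNinv, mul_sub, sub_mul]
    have t1 : P⁻¹ * ((1 - lam) • P) * P⁻¹ = (1 - lam) • P⁻¹ := by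
      rw [mul_smul_comm, smul_mul_assoc, Matrix.nonsing_inv_mul _ hPdet, one_mul]
    rw [t1]
    congr 1
    simp only [Matrix.mul_assoc]
  rw [hfinal_eq]
  have := EKFAux.tcongr_psd hMain P⁻¹
  rwa [hPinvt] at this
end
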